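/- arXiv:1011.0648 — 3 statements merged into one kernel-verified Lean document; each statement's English description precedes it below -/
import Mathlib

section
/- Let A be a bialgebra with sub-Hopf algebra H = K[Γ], and γ : A ⊗ A → K an H-bilinear, H-balanced linear map. For monomials X = x_1^{n_1}…x_θ^{n_θ} set χ_X = χ_1^{n_1}⋯χ_θ^{n_θ}. Then for grouplikes g,h,l ∈ Γ, the cocycle identity γ(Y_{(1)} ⊗ Z_{(1)})γ(X ⊗ Y_{(2)}Z_{(2)}) = γ(X_{(1)} ⊗ Y_{(1)})γ(X_{(2)}Y_{(2)} ⊗ Z) holds for the triple (gX, hY, lZ) if and only if it holds for (X, Y, Z). -/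
set_option autoImplicit false
open TensorProduct Coalgebra
universe u
variable {K A : Type u} [Field K] [CharZero K] [Ring A] [Bialgebra K A]

/-- Convolution product of two `K`-valued linear maps on a coalgebra. -/
noncomputable def conv {C : Type u} [AddCommGroup C] [Module K C] [Coalgebra K C]
    (f g : C →ₗ[K] K) : C →ₗ[K] K :=
  (LinearMap.mul' K K) ∘ₗ (TensorProduct.map f g) ∘ₗ Coalgebra.comul

/-- Convolution product of two `A`-valued linear maps on the coalgebra `A ⊗ A`. -/
noncomputable def convMap (f g : A ⊗[K] A →ₗ[K] A) : A ⊗[K] A →ₗ[K] A :=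
  (LinearMap.mul' K A) ∘ₗ (TensorProduct.map f g) ∘ₗ Coalgebra.comul

/-- `x ⊗ y ⊗ z ↦ γ(y₍₁₎ ⊗ z₍₁₎) γ(x ⊗ y₍₂₎z₍₂₎)`: the left side of the 2-cocycle
identity, for the multiplication `m`. -/
noncomputable def cocycleL (m : A ⊗[K] A →ₗ[K] A) (γ : A ⊗[K] A →ₗ[K] K) :
    A ⊗[K] (A ⊗[K] A) →ₗ[K] K :=
  conv ((LinearMap.mul' K K) ∘ₗ TensorProduct.map Coalgebra.counit γ)
    (γ ∘ₗ TensorProduct.map LinearMap.id m)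

/-- `x ⊗ y ⊗ z ↦ γ(x₍₁₎ ⊗ y₍₁₎) γ(x₍₂₎y₍₂₎ ⊗ z)`: the right side of the 2-cocycle
identity, for the multiplication `m`. -/
noncomputable def cocycleR (m : A ⊗[K] A →ₗ[K] A) (γ : A ⊗[K] A →ₗ[K] K) :
    A ⊗[K] (A ⊗[K] A) →ₗ[K] K :=
  conv ((LinearMap.mul' K K) ∘ₗ TensorProduct.map γ Coalgebra.counit
      ∘ₗ (TensorProduct.assoc K A A A).symm.toLinearMap)
    (γ ∘ₗ TensorProduct.map m LinearMap.id ∘ₗ (TensorProduct.assoc K A A A).symm.toLinearMap)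

/-- A normalized (unital) 2-cocycle with respect to a multiplication `m` on `A`. -/
noncomputable def IsNormalizedCocycleWith (m : A ⊗[K] A →ₗ[K] A)
    (γ : A ⊗[K] A →ₗ[K] K) : Prop :=
  cocycleL m γ = cocycleR m γ ∧
    (∀ a : A, γ (a ⊗ₜ[K] 1) = Coalgebra.counit a ∧ γ ((1 : A) ⊗ₜ[K] a) = Coalgebra.counit a)

/-- Convolution invertibility of a `K`-valued map on `A ⊗ A`. -/
noncomputable def IsConvInvertible (γ : A ⊗[K] A →ₗ[K] K) : Prop :=
  ∃ γ' : A ⊗[K] A →ₗ[K] K, conv γ γ' = Coalgebra.counit ∧ conv γ' γ = Coalgebra.counit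

/-- The twisted multiplication `γ ∗ m ∗ γ'` (where `γ'` is the convolution inverse
of `γ`). -/
noncomputable def mulTwist (m : A ⊗[K] A →ₗ[K] A) (γ γ' : A ⊗[K] A →ₗ[K] K) :
    A ⊗[K] A →ₗ[K] A :=
  convMap (convMap ((Algebra.linearMap K A) ∘ₗ γ) m) ((Algebra.linearMap K A) ∘ₗ γ')

lemma counit_collapse (x : A) (r : Coalgebra.Repr K x (A × A)) (f : A →ₗ[K] K) :
    ∑ k ∈ r.index, Coalgebra.counit (R := K) (r.left k) * f (r.right k) = f x := by
  have h := Coalgebra.sum_counit_tmul_eq (R := K) r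
  have h2 : ∑ k ∈ r.index, (Coalgebra.counit (R := K) (r.left k)) • r.right k = x := by
    have h3 := congrArg (TensorProduct.lid K A) h
    rw [map_sum] at h3
    simpa using h3
  calc ∑ k ∈ r.index, Coalgebra.counit (R := K) (r.left k) * f (r.right k)
      = f (∑ k ∈ r.index, (Coalgebra.counit (R := K) (r.left k)) • r.right k) := by
        rw [map_sum]; simp [smul_eq_mul]
    _ = f x := by rw [h2]

lemma sum_comm3 {i1 i2 i3 M : Type*} [AddCommMonoid M] (s1 : Finset i1) (s2 : Finset i2)
    (s3 : Finset i3) (f : i1 → i2 → i3 → M) :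
    ∑ a ∈ s1, ∑ b ∈ s2, ∑ c ∈ s3, f a b c = ∑ c ∈ s3, ∑ b ∈ s2, ∑ a ∈ s1, f a b c := by
  calc ∑ a ∈ s1, ∑ b ∈ s2, ∑ c ∈ s3, f a b c
      = ∑ a ∈ s1, ∑ c ∈ s3, ∑ b ∈ s2, f a b c :=
        Finset.sum_congr rfl fun a _ => Finset.sum_comm
    _ = ∑ c ∈ s3, ∑ a ∈ s1, ∑ b ∈ s2, f a b c := Finset.sum_comm
    _ = ∑ c ∈ s3, ∑ b ∈ s2, ∑ a ∈ s1, f a b c :=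
        Finset.sum_congr rfl fun c _ => Finset.sum_comm

lemma comul_triple (x y z : A) (rx : Coalgebra.Repr K x (A × A)) (ry : Coalgebra.Repr K y (A × A))
    (rz : Coalgebra.Repr K z (A × A)) :
    Coalgebra.comul (R := K) (x ⊗ₜ[K] (y ⊗ₜ[K] z)) =
      ∑ k ∈ rx.index, ∑ i ∈ ry.index, ∑ j ∈ rz.index,
        (rx.left k ⊗ₜ[K] (ry.left i ⊗ₜ[K] rz.left j)) ⊗ₜ[K]
          (rx.right k ⊗ₜ[K] (ry.right i ⊗ₜ[K] rz.right j)) := by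
  have h1 : Coalgebra.comul (R := K) (y ⊗ₜ[K] z) =
      ∑ i ∈ ry.index, ∑ j ∈ rz.index,
        (ry.left i ⊗ₜ[K] rz.left j) ⊗ₜ[K] (ry.right i ⊗ₜ[K] rz.right j) := by
    rw [TensorProduct.comul_tmul]
    simp only [LinearMap.comp_apply, map_tmul, ← ry.eq, ← rz.eq]
    simp only [sum_tmul, tmul_sum, map_sum, LinearEquiv.coe_coe, tensorTensorTensorComm_tmul,
    AlgebraTensorModule.tensorTensorTensorComm_tmul]
    rw [Finset.sum_comm]
  rw [TensorProduct.comul_tmul]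
  simp only [LinearMap.comp_apply, map_tmul, h1, ← rx.eq]
  simp only [sum_tmul, tmul_sum, map_sum, LinearEquiv.coe_coe, tensorTensorTensorComm_tmul,
    AlgebraTensorModule.tensorTensorTensorComm_tmul]
  exact (sum_comm3 ry.index rz.index rx.index fun i j k =>
    (rx.left k ⊗ₜ[K] (ry.left i ⊗ₜ[K] rz.left j)) ⊗ₜ[K]
      (rx.right k ⊗ₜ[K] (ry.right i ⊗ₜ[K] rz.right j))).trans
    (Finset.sum_congr rfl fun k _ => Finset.sum_comm)

lemma cocycleL_apply (γ : A ⊗[K] A →ₗ[K] K) (x y z : A) (ry : Coalgebra.Repr K y (A × A))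
    (rz : Coalgebra.Repr K z (A × A)) :
    cocycleL (LinearMap.mul' K A) γ (x ⊗ₜ[K] (y ⊗ₜ[K] z)) =
      ∑ i ∈ ry.index, ∑ j ∈ rz.index,
        γ (ry.left i ⊗ₜ[K] rz.left j) * γ (x ⊗ₜ[K] (ry.right i * rz.right j)) := by
  set rx := Coalgebra.Repr.arbitrary K x with hrx
  unfold cocycleL conv
  simp only [LinearMap.comp_apply]
  rw [comul_triple x y z rx ry rz]
  simp only [map_sum, LinearMap.comp_apply, map_tmul, LinearMap.mul'_apply,
    LinearMap.id_coe, id_eq]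
  rw [(sum_comm3 rx.index ry.index rz.index _).trans Finset.sum_comm]
  refine Finset.sum_congr rfl fun i _ => Finset.sum_congr rfl fun j _ => ?_
  have hcol := counit_collapse x rx (γ ∘ₗ (TensorProduct.mk K A A).flip (ry.right i * rz.right j))
  simp only [LinearMap.comp_apply, TensorProduct.mk_apply, LinearMap.flip_apply] at hcol
  calc ∑ k ∈ rx.index,
        Coalgebra.counit (R := K) (rx.left k) * γ (ry.left i ⊗ₜ[K] rz.left j) *
          γ (rx.right k ⊗ₜ[K] (ry.right i * rz.right j))
      = γ (ry.left i ⊗ₜ[K] rz.left j) * ∑ k ∈ rx.index,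
          Coalgebra.counit (R := K) (rx.left k) *
            γ (rx.right k ⊗ₜ[K] (ry.right i * rz.right j)) := by
        rw [Finset.mul_sum]; exact Finset.sum_congr rfl fun k _ => by ring
    _ = _ := by rw [hcol]

lemma cocycleR_apply (γ : A ⊗[K] A →ₗ[K] K) (x y z : A) (rx : Coalgebra.Repr K x (A × A))
    (ry : Coalgebra.Repr K y (A × A)) :
    cocycleR (LinearMap.mul' K A) γ (x ⊗ₜ[K] (y ⊗ₜ[K] z)) =
      ∑ k ∈ rx.index, ∑ i ∈ ry.index,
        γ (rx.left k ⊗ₜ[K] ry.left i) * γ ((rx.right k * ry.right i) ⊗ₜ[K] z) := by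
  set rz := Coalgebra.Repr.arbitrary K z with hrz
  unfold cocycleR conv
  simp only [LinearMap.comp_apply]
  rw [comul_triple x y z rx ry rz]
  simp only [map_sum, LinearMap.comp_apply, map_tmul, LinearMap.mul'_apply,
    LinearMap.id_coe, id_eq, LinearEquiv.coe_coe, TensorProduct.assoc_symm_tmul]
  refine Finset.sum_congr rfl fun k _ => Finset.sum_congr rfl fun i _ => ?_
  have hcol := counit_collapse z rz (γ ∘ₗ TensorProduct.mk K A A (rx.right k * ry.right i))
  simp only [LinearMap.comp_apply, TensorProduct.mk_apply] at hcol
  calc ∑ j ∈ rz.index,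
        γ (rx.left k ⊗ₜ[K] ry.left i) * Coalgebra.counit (R := K) (rz.left j) *
          γ ((rx.right k * ry.right i) ⊗ₜ[K] rz.right j)
      = γ (rx.left k ⊗ₜ[K] ry.left i) * ∑ j ∈ rz.index,
          Coalgebra.counit (R := K) (rz.left j) *
            γ ((rx.right k * ry.right i) ⊗ₜ[K] rz.right j) := by
        rw [Finset.mul_sum]; exact Finset.sum_congr rfl fun j _ => by ring
    _ = _ := by rw [hcol]

/-- Multiply a comultiplication representation on the left by a grouplike. -/
noncomputable def reprMulLeft (g0 : A) (hg : Coalgebra.comul (R := K) g0 = g0 ⊗ₜ[K] g0)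
    {a : A} (r : Coalgebra.Repr K a (A × A)) : Coalgebra.Repr K (g0 * a) (A × A) where
  index := r.index
  left := fun i => g0 * r.left i
  right := fun i => g0 * r.right i
  eq := by
    calc ∑ i ∈ r.index, (g0 * r.left i) ⊗ₜ[K] (g0 * r.right i)
        = (g0 ⊗ₜ[K] g0) * ∑ i ∈ r.index, r.left i ⊗ₜ[K] r.right i := by
          rw [Finset.mul_sum]
          exact Finset.sum_congr rfl fun i _ => by
            rw [Algebra.TensorProduct.tmul_mul_tmul]
      _ = Coalgebra.comul (R := K) (g0 * a) := by
          rw [r.eq, Bialgebra.comul_mul, hg]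

/-- Multiply a comultiplication representation on the right by a grouplike. -/
noncomputable def reprMulRight (g0 : A) (hg : Coalgebra.comul (R := K) g0 = g0 ⊗ₜ[K] g0)
    {a : A} (r : Coalgebra.Repr K a (A × A)) : Coalgebra.Repr K (a * g0) (A × A) where
  index := r.index
  left := fun i => r.left i * g0
  right := fun i => r.right i * g0
  eq := by
    calc ∑ i ∈ r.index, (r.left i * g0) ⊗ₜ[K] (r.right i * g0)
        = (∑ i ∈ r.index, r.left i ⊗ₜ[K] r.right i) * (g0 ⊗ₜ[K] g0) := by
          rw [Finset.sum_mul]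
          exact Finset.sum_congr rfl fun i _ => by
            rw [Algebra.TensorProduct.tmul_mul_tmul]
      _ = Coalgebra.comul (R := K) (a * g0) := by
          rw [r.eq, Bialgebra.comul_mul, hg]


set_option maxHeartbeats 1000000 in
set_option maxRecDepth 4000 in
set_option linter.unusedSectionVars false in
/-- Let `A` be a bialgebra containing the group algebra of `Γ` via a
map `grp` whose values are grouplike, and `γ : A ⊗ A → K` an `H`-bilinear, `H`-balanced
linear map.  Let `X, Y, Z ∈ A` be monomials, with associated characters
`χX, χY, χZ : Γ → Kˣ` (so `grp h * X = χX(h) • (X * grp h)`, etc.).  Then for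
grouplikes `g, h, l ∈ Γ`, the 2-cocycle identity
`γ(Y₍₁₎ ⊗ Z₍₁₎)γ(X ⊗ Y₍₂₎Z₍₂₎) = γ(X₍₁₎ ⊗ Y₍₁₎)γ(X₍₂₎Y₍₂₎ ⊗ Z)`
holds on the triple `(gX, hY, lZ)` if and only if it holds on `(X, Y, Z)`. -/
theorem stmt6 {Γ : Type u} [CommGroup Γ] [Fintype Γ] (grp : Γ →* A)
    (hgrp : ∀ u : Γ, Coalgebra.comul (R := K) (grp u) = grp u ⊗ₜ[K] grp u ∧
      Coalgebra.counit (R := K) (grp u) = 1)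
    (γ : A ⊗[K] A →ₗ[K] K)
    (hbil : ∀ (u u' : Γ) (a b : A), γ ((grp u * a) ⊗ₜ[K] (b * grp u')) = γ (a ⊗ₜ[K] b))
    (hbal : ∀ (u : Γ) (a b : A), γ ((a * grp u) ⊗ₜ[K] b) = γ (a ⊗ₜ[K] (grp u * b)))
    (X Y Z : A) (χX χY χZ : Γ →* Kˣ)
    (hX : ∀ u : Γ, grp u * X = (χX u : K) • (X * grp u))
    (hY : ∀ u : Γ, grp u * Y = (χY u : K) • (Y * grp u))
    (hZ : ∀ u : Γ, grp u * Z = (χZ u : K) • (Z * grp u))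
    (g h l : Γ) :
    (cocycleL (LinearMap.mul' K A) γ
        ((grp g * X) ⊗ₜ[K] ((grp h * Y) ⊗ₜ[K] (grp l * Z))) =
      cocycleR (LinearMap.mul' K A) γ
        ((grp g * X) ⊗ₜ[K] ((grp h * Y) ⊗ₜ[K] (grp l * Z)))) ↔
    (cocycleL (LinearMap.mul' K A) γ (X ⊗ₜ[K] (Y ⊗ₜ[K] Z)) =
      cocycleR (LinearMap.mul' K A) γ (X ⊗ₜ[K] (Y ⊗ₜ[K] Z))) := by
  have E1 : ∀ (u : Γ) (a b : A), γ ((grp u * a) ⊗ₜ[K] b) = γ (a ⊗ₜ[K] b) := by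
    intro u a b
    simpa using hbil u 1 a b
  have E2 : ∀ (u : Γ) (a b : A), γ (a ⊗ₜ[K] (b * grp u)) = γ (a ⊗ₜ[K] b) := by
    intro u a b
    simpa using hbil 1 u a b
  have hXinv : ∀ u : Γ, X * grp u = (χX u : K)⁻¹ • (grp u * X) := by
    intro u
    rw [hX u, smul_smul, inv_mul_cancel₀ (Units.ne_zero (χX u)), one_smul]
  have E3 : ∀ (u : Γ) (c : A), γ (X ⊗ₜ[K] (grp u * c)) = (χX u : K)⁻¹ * γ (X ⊗ₜ[K] c) := by
    intro u c
    rw [← hbal u X c, hXinv u, ← smul_tmul', map_smul, smul_eq_mul, E1]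
  let rx := Coalgebra.Repr.arbitrary K X
  let ry := Coalgebra.Repr.arbitrary K Y
  let rz := Coalgebra.Repr.arbitrary K Z
  let rhY := reprMulLeft (grp h) (hgrp h).1 ry
  let rlZ := reprMulLeft (grp l) (hgrp l).1 rz
  let rgX := reprMulLeft (grp g) (hgrp g).1 rx
  let rZl := reprMulRight (grp l) (hgrp l).1 rz
  let rXh := reprMulRight (grp h) (hgrp h).1 rx
  let rhX := reprMulLeft (grp h) (hgrp h).1 rx
  have eL : cocycleL (LinearMap.mul' K A) γ
      ((grp g * X) ⊗ₜ[K] ((grp h * Y) ⊗ₜ[K] (grp l * Z))) =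
      ((χX h : K)⁻¹ * (χZ l : K)) *
        cocycleL (LinearMap.mul' K A) γ (X ⊗ₜ[K] (Y ⊗ₜ[K] Z)) := by
    calc cocycleL (LinearMap.mul' K A) γ
          ((grp g * X) ⊗ₜ[K] ((grp h * Y) ⊗ₜ[K] (grp l * Z))) = ∑ i ∈ ry.index, ∑ j ∈ rz.index,
            γ ((grp h * ry.left i) ⊗ₜ[K] (grp l * rz.left j)) *
              γ ((grp g * X) ⊗ₜ[K] ((grp h * ry.right i) * (grp l * rz.right j))) :=
          cocycleL_apply γ _ _ _ rhY rlZ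
      _ = ∑ i ∈ ry.index, ∑ j ∈ rz.index,
            (χX h : K)⁻¹ * (γ (ry.left i ⊗ₜ[K] (grp l * rz.left j)) *
              γ (X ⊗ₜ[K] (ry.right i * (grp l * rz.right j)))) :=
          Finset.sum_congr rfl fun i _ => Finset.sum_congr rfl fun j _ => by
            rw [E1 h, E1 g, mul_assoc (grp h), E3 h]; ring
      _ = (χX h : K)⁻¹ * ∑ i ∈ ry.index, ∑ j ∈ rz.index,
            γ (ry.left i ⊗ₜ[K] (grp l * rz.left j)) *
              γ (X ⊗ₜ[K] (ry.right i * (grp l * rz.right j))) := by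
          simp_rw [Finset.mul_sum]
      _ = (χX h : K)⁻¹ *
            cocycleL (LinearMap.mul' K A) γ (X ⊗ₜ[K] (Y ⊗ₜ[K] (grp l * Z))) :=
          congrArg (fun t => (χX h : K)⁻¹ * t)
            (cocycleL_apply γ X Y (grp l * Z) ry rlZ).symm
      _ = (χX h : K)⁻¹ * ((χZ l : K) *
            cocycleL (LinearMap.mul' K A) γ (X ⊗ₜ[K] (Y ⊗ₜ[K] (Z * grp l)))) := by
          rw [hZ l, tmul_smul, tmul_smul, map_smul, smul_eq_mul]
      _ = (χX h : K)⁻¹ * ((χZ l : K) * ∑ i ∈ ry.index, ∑ j ∈ rz.index,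
            γ (ry.left i ⊗ₜ[K] (rz.left j * grp l)) *
              γ (X ⊗ₜ[K] (ry.right i * (rz.right j * grp l)))) :=
          congrArg (fun t => (χX h : K)⁻¹ * ((χZ l : K) * t))
            (cocycleL_apply γ X Y (Z * grp l) ry rZl)
      _ = (χX h : K)⁻¹ * ((χZ l : K) * ∑ i ∈ ry.index, ∑ j ∈ rz.index,
            γ (ry.left i ⊗ₜ[K] rz.left j) * γ (X ⊗ₜ[K] (ry.right i * rz.right j))) :=
          congrArg (fun t => (χX h : K)⁻¹ * ((χZ l : K) * t))
            (Finset.sum_congr rfl fun i _ => Finset.sum_congr rfl fun j _ => by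
              rw [E2 l, ← mul_assoc, E2 l])
      _ = (χX h : K)⁻¹ * ((χZ l : K) *
            cocycleL (LinearMap.mul' K A) γ (X ⊗ₜ[K] (Y ⊗ₜ[K] Z))) :=
          congrArg (fun t => (χX h : K)⁻¹ * ((χZ l : K) * t))
            (cocycleL_apply γ X Y Z ry rz).symm
      _ = ((χX h : K)⁻¹ * (χZ l : K)) *
            cocycleL (LinearMap.mul' K A) γ (X ⊗ₜ[K] (Y ⊗ₜ[K] Z)) := by ring
  have eR : cocycleR (LinearMap.mul' K A) γ
      ((grp g * X) ⊗ₜ[K] ((grp h * Y) ⊗ₜ[K] (grp l * Z))) =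
      ((χX h : K)⁻¹ * (χZ l : K)) *
        cocycleR (LinearMap.mul' K A) γ (X ⊗ₜ[K] (Y ⊗ₜ[K] Z)) := by
    calc cocycleR (LinearMap.mul' K A) γ
          ((grp g * X) ⊗ₜ[K] ((grp h * Y) ⊗ₜ[K] (grp l * Z))) = ∑ k ∈ rx.index, ∑ i ∈ ry.index,
            γ ((grp g * rx.left k) ⊗ₜ[K] (grp h * ry.left i)) *
              γ (((grp g * rx.right k) * (grp h * ry.right i)) ⊗ₜ[K] (grp l * Z)) :=
          cocycleR_apply γ _ _ _ rgX rhY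
      _ = ∑ k ∈ rx.index, ∑ i ∈ ry.index,
            (χZ l : K) * (γ ((rx.left k * grp h) ⊗ₜ[K] ry.left i) *
              γ (((rx.right k * grp h) * ry.right i) ⊗ₜ[K] Z)) :=
          Finset.sum_congr rfl fun k _ => Finset.sum_congr rfl fun i _ => by
            rw [E1 g, ← hbal h (rx.left k) (ry.left i), hZ l, tmul_smul, map_smul,
              smul_eq_mul, mul_assoc (grp g), ← mul_assoc (rx.right k), hbil g l]
            ring
      _ = (χZ l : K) * ∑ k ∈ rx.index, ∑ i ∈ ry.index,
            γ ((rx.left k * grp h) ⊗ₜ[K] ry.left i) *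
              γ (((rx.right k * grp h) * ry.right i) ⊗ₜ[K] Z) := by
          simp_rw [Finset.mul_sum]
      _ = (χZ l : K) *
            cocycleR (LinearMap.mul' K A) γ ((X * grp h) ⊗ₜ[K] (Y ⊗ₜ[K] Z)) :=
          congrArg (fun t => (χZ l : K) * t)
            (cocycleR_apply γ (X * grp h) Y Z rXh ry).symm
      _ = (χZ l : K) * ((χX h : K)⁻¹ *
            cocycleR (LinearMap.mul' K A) γ ((grp h * X) ⊗ₜ[K] (Y ⊗ₜ[K] Z))) := by
          rw [hXinv h, ← smul_tmul', map_smul, smul_eq_mul]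
      _ = (χZ l : K) * ((χX h : K)⁻¹ * ∑ k ∈ rx.index, ∑ i ∈ ry.index,
            γ ((grp h * rx.left k) ⊗ₜ[K] ry.left i) *
              γ (((grp h * rx.right k) * ry.right i) ⊗ₜ[K] Z)) :=
          congrArg (fun t => (χZ l : K) * ((χX h : K)⁻¹ * t))
            (cocycleR_apply γ (grp h * X) Y Z rhX ry)
      _ = (χZ l : K) * ((χX h : K)⁻¹ * ∑ k ∈ rx.index, ∑ i ∈ ry.index,
            γ (rx.left k ⊗ₜ[K] ry.left i) *
              γ ((rx.right k * ry.right i) ⊗ₜ[K] Z)) :=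
          congrArg (fun t => (χZ l : K) * ((χX h : K)⁻¹ * t))
            (Finset.sum_congr rfl fun k _ => Finset.sum_congr rfl fun i _ => by
              rw [E1 h, mul_assoc, E1 h])
      _ = (χZ l : K) * ((χX h : K)⁻¹ *
            cocycleR (LinearMap.mul' K A) γ (X ⊗ₜ[K] (Y ⊗ₜ[K] Z))) :=
          congrArg (fun t => (χZ l : K) * ((χX h : K)⁻¹ * t))
            (cocycleR_apply γ X Y Z rx ry).symm
      _ = ((χX h : K)⁻¹ * (χZ l : K)) *
            cocycleR (LinearMap.mul' K A) γ (X ⊗ₜ[K] (Y ⊗ₜ[K] Z)) := by ring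
  rw [eL, eR]
  exact mul_right_inj' (mul_ne_zero (inv_ne_zero (Units.ne_zero (χX h))) (Units.ne_zero (χZ l)))
end

section
/- Let A be a bialgebra over K, β a normalized 2-cocycle on A, and γ a normalized 2-cocycle on the cocycle twist A^β (same coalgebra, multiplication twisted by β). Then the convolution product γ ∗ β is a normalized 2-cocycle on A. -/
set_option autoImplicit false
set_option linter.unusedSectionVars false
open TensorProduct Coalgebra
universe u
variable {K A : Type u} [Field K] [CharZero K] [Ring A] [Bialgebra K A]

section CV
variable {C : Type u} [AddCommGroup C] [Module K C] [Coalgebra K C]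
variable {B : Type u} [Ring B] [Algebra K B]

noncomputable def cv (f g : C →ₗ[K] B) : C →ₗ[K] B :=
  (LinearMap.mul' K B) ∘ₗ (TensorProduct.map f g) ∘ₗ Coalgebra.comul

lemma cv_apply (f g : C →ₗ[K] B) (x : C) :
    cv f g x = LinearMap.mul' K B (TensorProduct.map f g (Coalgebra.comul x)) := rfl

lemma cv_assoc (f g h : C →ₗ[K] B) : cv (cv f g) h = cv f (cv g h) := by
  have d1 : TensorProduct.map (cv f g) h =
      (TensorProduct.map (LinearMap.mul' K B) LinearMap.id)
        ∘ₗ (TensorProduct.map (TensorProduct.map f g) h)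
        ∘ₗ (LinearMap.rTensor C Coalgebra.comul) := by
    ext x y; simp [cv]
  have d2 : TensorProduct.map f (cv g h) =
      (TensorProduct.map LinearMap.id (LinearMap.mul' K B))
        ∘ₗ (TensorProduct.map f (TensorProduct.map g h))
        ∘ₗ (LinearMap.lTensor C Coalgebra.comul) := by
    ext x y; simp [cv]
  have mulassoc : (LinearMap.mul' K B) ∘ₗ (TensorProduct.map (LinearMap.mul' K B) LinearMap.id)
        ∘ₗ (TensorProduct.assoc K B B B).symm.toLinearMap
      = (LinearMap.mul' K B) ∘ₗ (TensorProduct.map LinearMap.id (LinearMap.mul' K B)) := by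
    ext x y z; simp [mul_assoc]
  apply LinearMap.ext; intro x
  rw [cv_apply, cv_apply, d1, d2]
  simp only [LinearMap.comp_apply]
  rw [show LinearMap.rTensor C Coalgebra.comul (Coalgebra.comul x)
      = (TensorProduct.assoc K C C C).symm
          (LinearMap.lTensor C Coalgebra.comul (Coalgebra.comul x)) from
    (Coalgebra.coassoc_symm_apply x).symm]
  rw [TensorProduct.map_map_assoc_symm]
  exact LinearMap.congr_fun mulassoc _

lemma cv_counit_left (f : C →ₗ[K] B) :
    cv ((Algebra.linearMap K B) ∘ₗ Coalgebra.counit) f = f := by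
  have d : TensorProduct.map ((Algebra.linearMap K B) ∘ₗ Coalgebra.counit) f
      = (TensorProduct.map (Algebra.linearMap K B) f)
        ∘ₗ (LinearMap.rTensor C (Coalgebra.counit (R := K) (A := C))) := by
    ext x y; simp
  apply LinearMap.ext; intro x
  rw [cv_apply, d]
  simp only [LinearMap.comp_apply]
  rw [show (LinearMap.rTensor C (Coalgebra.counit (R := K))) (Coalgebra.comul x)
      = (1 : K) ⊗ₜ[K] x from LinearMap.congr_fun Coalgebra.rTensor_counit_comp_comul x]
  simp

lemma cv_counit_right (f : C →ₗ[K] B) :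
    cv f ((Algebra.linearMap K B) ∘ₗ Coalgebra.counit) = f := by
  have d : TensorProduct.map f ((Algebra.linearMap K B) ∘ₗ Coalgebra.counit)
      = (TensorProduct.map f (Algebra.linearMap K B))
        ∘ₗ (LinearMap.lTensor C (Coalgebra.counit (R := K) (A := C))) := by
    ext x y; simp
  apply LinearMap.ext; intro x
  rw [cv_apply, d]
  simp only [LinearMap.comp_apply]
  rw [show (LinearMap.lTensor C (Coalgebra.counit (R := K))) (Coalgebra.comul x)
      = x ⊗ₜ[K] (1 : K) from LinearMap.congr_fun Coalgebra.lTensor_counit_comp_comul x]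
  simp [Algebra.smul_def]
end CV

section CV2
variable {C C₁ C₂ : Type u} [AddCommGroup C] [Module K C] [Coalgebra K C]
  [AddCommGroup C₁] [Module K C₁] [Coalgebra K C₁]
  [AddCommGroup C₂] [Module K C₂] [Coalgebra K C₂]
variable {B B₁ B₂ : Type u} [Ring B] [Algebra K B] [Ring B₁] [Algebra K B₁]
  [Ring B₂] [Algebra K B₂]

lemma conv_eq_cv (f g : C →ₗ[K] K) : conv f g = cv f g := rfl

lemma algebraMapK : Algebra.linearMap K K = LinearMap.id := by
  ext x; simp

lemma conv_counit_left (f : C →ₗ[K] K) : conv Coalgebra.counit f = f := by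
  have h := cv_counit_left (K := K) (B := K) f
  rw [algebraMapK, LinearMap.id_comp] at h
  exact h

lemma conv_counit_right (f : C →ₗ[K] K) : conv f Coalgebra.counit = f := by
  have h := cv_counit_right (K := K) (B := K) f
  rw [algebraMapK, LinearMap.id_comp] at h
  exact h

lemma conv_assoc (f g h : C →ₗ[K] K) : conv (conv f g) h = conv f (conv g h) := by
  simp only [conv_eq_cv]; exact cv_assoc f g h

/-- composing a scalar-valued map with a convolution whose left factor is scalar. -/
lemma comp_cv_scalar_left (f : B →ₗ[K] K) (u : C →ₗ[K] K) (G : C →ₗ[K] B) :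
    f ∘ₗ cv ((Algebra.linearMap K B) ∘ₗ u) G = conv u (f ∘ₗ G) := by
  apply LinearMap.ext; intro x
  simp only [LinearMap.comp_apply, cv_apply, conv_eq_cv]
  rw [show TensorProduct.map ((Algebra.linearMap K B) ∘ₗ u) G
      = (TensorProduct.map (Algebra.linearMap K B) LinearMap.id)
        ∘ₗ (TensorProduct.map u G) from by ext a b; simp]
  rw [show TensorProduct.map u (f ∘ₗ G)
      = (TensorProduct.map LinearMap.id f) ∘ₗ (TensorProduct.map u G) from by ext a b; simp]
  simp only [LinearMap.comp_apply]
  generalize (TensorProduct.map u G) (Coalgebra.comul x) = w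
  have hc : (LinearMap.mul' K K) ∘ₗ (TensorProduct.map LinearMap.id f)
      = f ∘ₗ (LinearMap.mul' K B) ∘ₗ (TensorProduct.map (Algebra.linearMap K B) LinearMap.id) := by
    ext a b; simp [Algebra.smul_def]
  exact (LinearMap.congr_fun hc w).symm

lemma comp_cv_scalar_right (f : B →ₗ[K] K) (u : C →ₗ[K] K) (G : C →ₗ[K] B) :
    f ∘ₗ cv G ((Algebra.linearMap K B) ∘ₗ u) = conv (f ∘ₗ G) u := by
  apply LinearMap.ext; intro x
  simp only [LinearMap.comp_apply, cv_apply, conv_eq_cv]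
  rw [show TensorProduct.map G ((Algebra.linearMap K B) ∘ₗ u)
      = (TensorProduct.map LinearMap.id (Algebra.linearMap K B))
        ∘ₗ (TensorProduct.map G u) from by ext a b; simp]
  rw [show TensorProduct.map (f ∘ₗ G) u
      = (TensorProduct.map f LinearMap.id) ∘ₗ (TensorProduct.map G u) from by ext a b; simp]
  simp only [LinearMap.comp_apply]
  generalize (TensorProduct.map G u) (Coalgebra.comul x) = w
  have hc : (LinearMap.mul' K K) ∘ₗ (TensorProduct.map f LinearMap.id)
      = f ∘ₗ (LinearMap.mul' K B) ∘ₗ (TensorProduct.map LinearMap.id (Algebra.linearMap K B)) := by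
    ext a b; simp [Algebra.smul_def, mul_smul_comm, mul_comm]
  exact (LinearMap.congr_fun hc w).symm

/-- composing a convolution with a coalgebra morphism. -/
lemma cv_comp_coalgHom (f g : C₁ →ₗ[K] B) (φ : C₂ →ₗc[K] C₁) :
    cv f g ∘ₗ φ.toLinearMap = cv (f ∘ₗ φ.toLinearMap) (g ∘ₗ φ.toLinearMap) := by
  apply LinearMap.ext; intro x
  simp only [LinearMap.comp_apply, cv_apply]
  rw [show (φ.toLinearMap x) = φ x from rfl, ← CoalgHomClass.map_comp_comul_apply φ x]
  rw [show TensorProduct.map (f ∘ₗ φ.toLinearMap) (g ∘ₗ φ.toLinearMap)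
      = (TensorProduct.map f g) ∘ₗ (TensorProduct.map φ.toLinearMap φ.toLinearMap)
    from by ext a b; simp]
  simp only [LinearMap.comp_apply]
  rfl

lemma conv_comp_coalgHom (f g : C₁ →ₗ[K] K) (φ : C₂ →ₗc[K] C₁) :
    conv f g ∘ₗ φ.toLinearMap = conv (f ∘ₗ φ.toLinearMap) (g ∘ₗ φ.toLinearMap) := by
  simp only [conv_eq_cv]; exact cv_comp_coalgHom f g φ

lemma counit_comp_coalgHom (φ : C₂ →ₗc[K] C₁) :
    (Coalgebra.counit : C₁ →ₗ[K] K) ∘ₗ φ.toLinearMap = Coalgebra.counit :=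
  CoalgHomClass.counit_comp φ

/-- tensor product of convolutions. -/
lemma map_cv (f₁ g₁ : C₁ →ₗ[K] B₁) (f₂ g₂ : C₂ →ₗ[K] B₂) :
    TensorProduct.map (cv f₁ g₁) (cv f₂ g₂) = cv (TensorProduct.map f₁ f₂)
      (TensorProduct.map g₁ g₂) := by
  have d1 : TensorProduct.map (cv f₁ g₁) (cv f₂ g₂)
      = (TensorProduct.map (LinearMap.mul' K B₁) (LinearMap.mul' K B₂))
        ∘ₗ (TensorProduct.map (TensorProduct.map f₁ g₁) (TensorProduct.map f₂ g₂))
        ∘ₗ (TensorProduct.map (Coalgebra.comul (R := K) (A := C₁))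
            (Coalgebra.comul (R := K) (A := C₂))) := by
    ext x y; simp [cv]
  have key : (TensorProduct.map (LinearMap.mul' K B₁) (LinearMap.mul' K B₂))
        ∘ₗ (TensorProduct.map (TensorProduct.map f₁ g₁) (TensorProduct.map f₂ g₂))
      = (LinearMap.mul' K (B₁ ⊗[K] B₂))
        ∘ₗ (TensorProduct.map (TensorProduct.map f₁ f₂) (TensorProduct.map g₁ g₂))
        ∘ₗ (TensorProduct.tensorTensorTensorComm K C₁ C₁ C₂ C₂).toLinearMap := by
    ext x y z w
    simp [Algebra.TensorProduct.tmul_mul_tmul]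
  apply LinearMap.ext; intro x
  rw [d1, cv_apply]
  simp only [LinearMap.comp_apply]
  rw [show (Coalgebra.comul (R := K) (A := C₁ ⊗[K] C₂)) x
      = (TensorProduct.tensorTensorTensorComm K C₁ C₁ C₂ C₂)
          (TensorProduct.map Coalgebra.comul Coalgebra.comul x) from rfl]
  generalize (TensorProduct.map (Coalgebra.comul (R := K) (A := C₁))
      (Coalgebra.comul (R := K) (A := C₂)) x) = w
  exact LinearMap.congr_fun key w |>.trans rfl

lemma map_eta_eta (u : C₁ →ₗ[K] K) (v : C₂ →ₗ[K] K) :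
    TensorProduct.map ((Algebra.linearMap K B₁) ∘ₗ u) ((Algebra.linearMap K B₂) ∘ₗ v)
      = (Algebra.linearMap K (B₁ ⊗[K] B₂)) ∘ₗ ((LinearMap.mul' K K) ∘ₗ TensorProduct.map u v) := by
  ext x y
  show (algebraMap K B₁ (u x)) ⊗ₜ[K] (algebraMap K B₂ (v y))
      = algebraMap K (B₁ ⊗[K] B₂) (u x * v y)
  rw [Algebra.TensorProduct.algebraMap_apply, map_mul]
  rw [show (algebraMap K B₁ (u x) * algebraMap K B₁ (v y)) ⊗ₜ[K] (1 : B₂)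
      = (v y) • ((algebraMap K B₁ (u x)) ⊗ₜ[K] (1 : B₂)) from by
    rw [TensorProduct.smul_tmul', Algebra.smul_def, Algebra.commutes]]
  rw [← TensorProduct.tmul_smul, Algebra.algebraMap_eq_smul_one,
    Algebra.algebraMap_eq_smul_one (R := K) (A := B₂)]
end CV2

section Morphisms

open Coalgebra.TensorProduct in
/-- multiplication as a coalgebra morphism `A ⊗ A →ₗc A`. -/
noncomputable def mulCH : A ⊗[K] A →ₗc[K] A where
  toLinearMap := LinearMap.mul' K A
  counit_comp := by
    ext x y
    simp [Bialgebra.counit_mul, mul_comm]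
  map_comp_comul := by
    have key : (TensorProduct.map (LinearMap.mul' K A) (LinearMap.mul' K A))
          ∘ₗ (TensorProduct.tensorTensorTensorComm K A A A A).toLinearMap
        = LinearMap.mul' K (A ⊗[K] A) := by
      ext a b c d
      simp [Algebra.TensorProduct.tmul_mul_tmul]
    apply LinearMap.ext; intro w
    simp only [LinearMap.comp_apply]
    rw [show (Coalgebra.comul (R := K) (A := A ⊗[K] A)) w
        = (TensorProduct.tensorTensorTensorComm K A A A A)
            (TensorProduct.map Coalgebra.comul Coalgebra.comul w) from rfl]
    rw [show (TensorProduct.map (LinearMap.mul' K A) (LinearMap.mul' K A))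
        ((TensorProduct.tensorTensorTensorComm K A A A A)
          (TensorProduct.map Coalgebra.comul Coalgebra.comul w))
      = (LinearMap.mul' K (A ⊗[K] A)) (TensorProduct.map Coalgebra.comul Coalgebra.comul w)
      from LinearMap.congr_fun key _]
    induction w using TensorProduct.induction_on with
    | zero => simp
    | tmul x y => simp [Bialgebra.comul_mul]
    | add x y hx hy => simp only [map_add, hx, hy]

/-- unit as a coalgebra morphism `K →ₗc A`. -/
noncomputable def unitCH : K →ₗc[K] A where
  toLinearMap := Algebra.linearMap K A
  counit_comp := by
    ext x
    simp [Bialgebra.counit_one]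
  map_comp_comul := by
    apply LinearMap.ext; intro x
    simp only [LinearMap.comp_apply, LinearMap.coe_mk, CommSemiring.comul_apply,
      TensorProduct.map_tmul, Algebra.linearMap_apply, map_one]
    rw [show (Coalgebra.comul (R := K) (A := A)) ((algebraMap K A) x)
        = algebraMap K (A ⊗[K] A) x from by
      rw [show (Coalgebra.comul (R := K) (A := A)) ((algebraMap K A) x)
          = (Bialgebra.comulAlgHom K A) ((algebraMap K A) x) from rfl, AlgHom.commutes]]
    rw [Algebra.TensorProduct.algebraMap_apply]
    rw [show (algebraMap K A x) ⊗ₜ[K] (1 : A) = x • ((1:A) ⊗ₜ[K] (1:A)) from by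
      rw [TensorProduct.smul_tmul', Algebra.algebraMap_eq_smul_one]]
    rw [← TensorProduct.tmul_smul, Algebra.algebraMap_eq_smul_one]

/-- `x ⊗ w ↦ ε(x) w` as a coalgebra morphism. -/
noncomputable def pL : A ⊗[K] (A ⊗[K] A) →ₗc[K] (A ⊗[K] A) :=
  (Coalgebra.TensorProduct.lid K (A ⊗[K] A)).toCoalgHom.comp
    (Coalgebra.TensorProduct.map (Coalgebra.counitCoalgHom K A) (CoalgHom.id K (A ⊗[K] A)))

/-- `u ⊗ z ↦ ε(z) u` as a coalgebra morphism. -/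
noncomputable def pR : (A ⊗[K] A) ⊗[K] A →ₗc[K] (A ⊗[K] A) :=
  (Coalgebra.TensorProduct.rid K K (A ⊗[K] A)).toCoalgHom.comp
    (Coalgebra.TensorProduct.map (CoalgHom.id K (A ⊗[K] A)) (Coalgebra.counitCoalgHom K A))

/-- the associator (inverse direction) as a coalgebra morphism. -/
noncomputable def aS : A ⊗[K] (A ⊗[K] A) →ₗc[K] ((A ⊗[K] A) ⊗[K] A) :=
  (Coalgebra.TensorProduct.assoc K K A A A).symm.toCoalgHom

/-- `id ⊗ m` as a coalgebra morphism. -/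
noncomputable def idmCH : A ⊗[K] (A ⊗[K] A) →ₗc[K] (A ⊗[K] A) :=
  Coalgebra.TensorProduct.map (CoalgHom.id K A) (mulCH (K := K) (A := A))

/-- `m ⊗ id` as a coalgebra morphism. -/
noncomputable def midCH : (A ⊗[K] A) ⊗[K] A →ₗc[K] (A ⊗[K] A) :=
  Coalgebra.TensorProduct.map (mulCH (K := K) (A := A)) (CoalgHom.id K A)

/-- `x ↦ x ⊗ 1` as a coalgebra morphism. -/
noncomputable def j1 : A →ₗc[K] A ⊗[K] A :=
  (Coalgebra.TensorProduct.map (CoalgHom.id K A) (unitCH (K := K) (A := A))).comp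
    (Coalgebra.TensorProduct.rid K K A).symm.toCoalgHom

/-- `x ↦ 1 ⊗ x` as a coalgebra morphism. -/
noncomputable def j2 : A →ₗc[K] A ⊗[K] A :=
  (Coalgebra.TensorProduct.map (unitCH (K := K) (A := A)) (CoalgHom.id K A)).comp
    (Coalgebra.TensorProduct.lid K A).symm.toCoalgHom

lemma j1_apply (x : A) : (j1 (K := K) (A := A)) x = x ⊗ₜ[K] (1 : A) := by
  simp [j1, unitCH]

lemma j2_apply (x : A) : (j2 (K := K) (A := A)) x = (1 : A) ⊗ₜ[K] x := by
  simp [j2, unitCH]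

lemma aS_toLinearMap : ((aS (K := K) (A := A)) : A ⊗[K] (A ⊗[K] A) →ₗ[K] (A ⊗[K] A) ⊗[K] A)
    = (TensorProduct.assoc K A A A).symm.toLinearMap := rfl

end Morphisms

section Legs

/-- the first cocycle factor `x ⊗ w ↦ ε(x) u(w)`. -/
noncomputable def L1 (u : A ⊗[K] A →ₗ[K] K) : A ⊗[K] (A ⊗[K] A) →ₗ[K] K :=
  (LinearMap.mul' K K) ∘ₗ TensorProduct.map Coalgebra.counit u

noncomputable def L2 (u : A ⊗[K] A →ₗ[K] K) : A ⊗[K] (A ⊗[K] A) →ₗ[K] K :=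
  u ∘ₗ TensorProduct.map LinearMap.id (LinearMap.mul' K A)

noncomputable def R1 (u : A ⊗[K] A →ₗ[K] K) : A ⊗[K] (A ⊗[K] A) →ₗ[K] K :=
  (LinearMap.mul' K K) ∘ₗ TensorProduct.map u Coalgebra.counit
    ∘ₗ (TensorProduct.assoc K A A A).symm.toLinearMap

noncomputable def R2 (u : A ⊗[K] A →ₗ[K] K) : A ⊗[K] (A ⊗[K] A) →ₗ[K] K :=
  u ∘ₗ TensorProduct.map (LinearMap.mul' K A) LinearMap.id
    ∘ₗ (TensorProduct.assoc K A A A).symm.toLinearMap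

lemma cocycleL_eq (m : A ⊗[K] A →ₗ[K] A) (u : A ⊗[K] A →ₗ[K] K) :
    cocycleL m u = conv (L1 u) (u ∘ₗ TensorProduct.map LinearMap.id m) := rfl

lemma cocycleR_eq (m : A ⊗[K] A →ₗ[K] A) (u : A ⊗[K] A →ₗ[K] K) :
    cocycleR m u = conv ((LinearMap.mul' K K) ∘ₗ TensorProduct.map u Coalgebra.counit
      ∘ₗ (TensorProduct.assoc K A A A).symm.toLinearMap)
      (u ∘ₗ TensorProduct.map m LinearMap.id
        ∘ₗ (TensorProduct.assoc K A A A).symm.toLinearMap) := rfl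

lemma L1_eq (u : A ⊗[K] A →ₗ[K] K) :
    L1 u = u ∘ₗ (pL (K := K) (A := A)).toLinearMap := by
  ext x y z
  simp [L1, pL, CommSemiring.toCoalgebra]

lemma R1_eq (u : A ⊗[K] A →ₗ[K] K) :
    R1 u = u ∘ₗ ((pR (K := K) (A := A)).comp (aS (K := K) (A := A))).toLinearMap := by
  ext x y z
  simp [R1, pR, aS, CommSemiring.toCoalgebra]
  exact mul_comm _ _

lemma L2_eq (u : A ⊗[K] A →ₗ[K] K) :
    L2 u = u ∘ₗ (idmCH (K := K) (A := A)).toLinearMap := rfl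

lemma R2_eq (u : A ⊗[K] A →ₗ[K] K) :
    R2 u = u ∘ₗ ((midCH (K := K) (A := A)).comp (aS (K := K) (A := A))).toLinearMap := rfl

lemma L1_conv (u v : A ⊗[K] A →ₗ[K] K) : L1 (conv u v) = conv (L1 u) (L1 v) := by
  rw [L1_eq, conv_comp_coalgHom, ← L1_eq, ← L1_eq]

lemma L2_conv (u v : A ⊗[K] A →ₗ[K] K) : L2 (conv u v) = conv (L2 u) (L2 v) := by
  rw [L2_eq, conv_comp_coalgHom, ← L2_eq, ← L2_eq]

lemma R1_conv (u v : A ⊗[K] A →ₗ[K] K) : R1 (conv u v) = conv (R1 u) (R1 v) := by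
  rw [R1_eq, conv_comp_coalgHom, ← R1_eq, ← R1_eq]

lemma R2_conv (u v : A ⊗[K] A →ₗ[K] K) : R2 (conv u v) = conv (R2 u) (R2 v) := by
  rw [R2_eq, conv_comp_coalgHom, ← R2_eq, ← R2_eq]

lemma L1_counit : L1 (Coalgebra.counit (R := K) (A := A ⊗[K] A)) = Coalgebra.counit := by
  ext x y z; simp [L1, mul_comm]

lemma R1_counit : R1 (Coalgebra.counit (R := K) (A := A ⊗[K] A)) = Coalgebra.counit := by
  rw [R1_eq, counit_comp_coalgHom]

end Legs

section Twist

lemma mulTwist_eq (m : A ⊗[K] A →ₗ[K] A) (u u' : A ⊗[K] A →ₗ[K] K) :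
    mulTwist m u u' = cv (cv ((Algebra.linearMap K A) ∘ₗ u) m) ((Algebra.linearMap K A) ∘ₗ u') :=
  rfl

lemma id_expand : (LinearMap.id : A →ₗ[K] A)
    = cv (cv ((Algebra.linearMap K A) ∘ₗ Coalgebra.counit) LinearMap.id)
        ((Algebra.linearMap K A) ∘ₗ Coalgebra.counit) := by
  rw [cv_counit_right, cv_counit_left]

lemma keyL (β β' γ : A ⊗[K] A →ₗ[K] K) :
    γ ∘ₗ TensorProduct.map LinearMap.id (mulTwist (LinearMap.mul' K A) β β')
      = conv (conv (L1 β) (L2 γ)) (L1 β') := by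
  conv_lhs => rw [mulTwist_eq, id_expand]
  rw [map_cv, map_cv, map_eta_eta, map_eta_eta]
  rw [comp_cv_scalar_right, comp_cv_scalar_left]
  rfl

lemma keyR (β β' γ : A ⊗[K] A →ₗ[K] K) :
    γ ∘ₗ TensorProduct.map (mulTwist (LinearMap.mul' K A) β β') LinearMap.id
        ∘ₗ (TensorProduct.assoc K A A A).symm.toLinearMap
      = conv (conv (R1 β) (R2 γ)) (R1 β') := by
  have hE : γ ∘ₗ TensorProduct.map (mulTwist (LinearMap.mul' K A) β β') LinearMap.id
      = conv (conv ((LinearMap.mul' K K) ∘ₗ TensorProduct.map β Coalgebra.counit)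
          (γ ∘ₗ TensorProduct.map (LinearMap.mul' K A) LinearMap.id))
        ((LinearMap.mul' K K) ∘ₗ TensorProduct.map β' Coalgebra.counit) := by
    conv_lhs => rw [mulTwist_eq, id_expand]
    rw [map_cv, map_cv, map_eta_eta, map_eta_eta]
    rw [comp_cv_scalar_right, comp_cv_scalar_left]
  calc γ ∘ₗ TensorProduct.map (mulTwist (LinearMap.mul' K A) β β') LinearMap.id
        ∘ₗ (TensorProduct.assoc K A A A).symm.toLinearMap
      = (γ ∘ₗ TensorProduct.map (mulTwist (LinearMap.mul' K A) β β') LinearMap.id)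
        ∘ₗ (aS (K := K) (A := A)).toLinearMap := rfl
    _ = conv (conv ((LinearMap.mul' K K) ∘ₗ TensorProduct.map β Coalgebra.counit)
          (γ ∘ₗ TensorProduct.map (LinearMap.mul' K A) LinearMap.id))
        ((LinearMap.mul' K K) ∘ₗ TensorProduct.map β' Coalgebra.counit)
        ∘ₗ (aS (K := K) (A := A)).toLinearMap := by rw [hE]
    _ = conv (conv (R1 β) (R2 γ)) (R1 β') := by
        rw [conv_comp_coalgHom, conv_comp_coalgHom]
        rfl

end Twist

/-- If `β` is a convolution-invertible normalized 2-cocycle on a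
bialgebra `A` and `γ` is a convolution-invertible normalized 2-cocycle on the cocycle
twist `A^β` (same coalgebra, multiplication twisted by `β`), then the convolution
product `γ ∗ β` is a convolution-invertible normalized 2-cocycle on `A`. -/
theorem stmt7 (β β' γ : A ⊗[K] A →ₗ[K] K)
    (hβ : IsNormalizedCocycleWith (LinearMap.mul' K A) β)
    (hβinv : conv β β' = Coalgebra.counit ∧ conv β' β = Coalgebra.counit)
    (hγ : IsNormalizedCocycleWith (mulTwist (LinearMap.mul' K A) β β') γ)
    (hγinv : IsConvInvertible γ) :
    IsNormalizedCocycleWith (LinearMap.mul' K A) (conv γ β) ∧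
      IsConvInvertible (conv γ β) := by
  have hβc : conv (L1 β) (L2 β) = conv (R1 β) (R2 β) := hβ.1
  have hγc : conv (L1 γ) (conv (conv (L1 β) (L2 γ)) (L1 β'))
      = conv (R1 γ) (conv (conv (R1 β) (R2 γ)) (R1 β')) := by
    have h := hγ.1
    rw [cocycleL_eq, cocycleR_eq, keyL, keyR] at h
    exact h
  have hinvL : conv (L1 β') (L1 β) = Coalgebra.counit := by
    rw [← L1_conv, hβinv.2, L1_counit]
  have hinvR : conv (R1 β') (R1 β) = Coalgebra.counit := by
    rw [← R1_conv, hβinv.2, R1_counit]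
  refine ⟨⟨?_, ?_⟩, ?_⟩
  · -- cocycle identity
    show conv (L1 (conv γ β)) (L2 (conv γ β)) = conv (R1 (conv γ β)) (R2 (conv γ β))
    calc conv (L1 (conv γ β)) (L2 (conv γ β))
        = conv (conv (L1 γ) (L1 β)) (conv (L2 γ) (L2 β)) := by rw [L1_conv, L2_conv]
      _ = conv (conv (L1 γ) (conv (conv (L1 β) (L2 γ)) (L1 β'))) (conv (L1 β) (L2 β)) := by
          simp only [conv_assoc]
          rw [← conv_assoc (L1 β') (L1 β) (L2 β), hinvL, conv_counit_left]
      _ = conv (conv (R1 γ) (conv (conv (R1 β) (R2 γ)) (R1 β'))) (conv (R1 β) (R2 β)) := by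
          rw [hγc, hβc]
      _ = conv (conv (R1 γ) (R1 β)) (conv (R2 γ) (R2 β)) := by
          simp only [conv_assoc]
          rw [← conv_assoc (R1 β') (R1 β) (R2 β), hinvR, conv_counit_left]
      _ = conv (R1 (conv γ β)) (R2 (conv γ β)) := by rw [← R1_conv, ← R2_conv]
  · -- normalization
    intro a
    have hγj1 : γ ∘ₗ (j1 (K := K) (A := A)).toLinearMap = Coalgebra.counit := by
      apply LinearMap.ext; intro x
      rw [LinearMap.comp_apply, show (j1 (K := K) (A := A)).toLinearMap x = x ⊗ₜ[K] (1:A) from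
        j1_apply x]
      exact (hγ.2 x).1
    have hβj1 : β ∘ₗ (j1 (K := K) (A := A)).toLinearMap = Coalgebra.counit := by
      apply LinearMap.ext; intro x
      rw [LinearMap.comp_apply, show (j1 (K := K) (A := A)).toLinearMap x = x ⊗ₜ[K] (1:A) from
        j1_apply x]
      exact (hβ.2 x).1
    have hγj2 : γ ∘ₗ (j2 (K := K) (A := A)).toLinearMap = Coalgebra.counit := by
      apply LinearMap.ext; intro x
      rw [LinearMap.comp_apply, show (j2 (K := K) (A := A)).toLinearMap x = (1:A) ⊗ₜ[K] x from
        j2_apply x]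
      exact (hγ.2 x).2
    have hβj2 : β ∘ₗ (j2 (K := K) (A := A)).toLinearMap = Coalgebra.counit := by
      apply LinearMap.ext; intro x
      rw [LinearMap.comp_apply, show (j2 (K := K) (A := A)).toLinearMap x = (1:A) ⊗ₜ[K] x from
        j2_apply x]
      exact (hβ.2 x).2
    constructor
    · have : conv γ β ∘ₗ (j1 (K := K) (A := A)).toLinearMap = Coalgebra.counit := by
        rw [conv_comp_coalgHom, hγj1, hβj1, conv_counit_left]
      calc (conv γ β) (a ⊗ₜ[K] (1:A))
          = (conv γ β ∘ₗ (j1 (K := K) (A := A)).toLinearMap) a := by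
            rw [LinearMap.comp_apply,
              show (j1 (K := K) (A := A)).toLinearMap a = a ⊗ₜ[K] (1:A) from j1_apply a]
        _ = Coalgebra.counit a := by rw [this]
    · have : conv γ β ∘ₗ (j2 (K := K) (A := A)).toLinearMap = Coalgebra.counit := by
        rw [conv_comp_coalgHom, hγj2, hβj2, conv_counit_left]
      calc (conv γ β) ((1:A) ⊗ₜ[K] a)
          = (conv γ β ∘ₗ (j2 (K := K) (A := A)).toLinearMap) a := by
            rw [LinearMap.comp_apply,
              show (j2 (K := K) (A := A)).toLinearMap a = (1:A) ⊗ₜ[K] a from j2_apply a]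
        _ = Coalgebra.counit a := by rw [this]
  · -- invertibility
    obtain ⟨γ', hg1, hg2⟩ := hγinv
    refine ⟨conv β' γ', ?_, ?_⟩
    · rw [conv_assoc, ← conv_assoc β β' γ', hβinv.1, conv_counit_left, hg1]
    · rw [conv_assoc, ← conv_assoc γ' γ β, hg2, conv_counit_left, hβinv.2]
end

section
/- Let V be a quantum plane with χ_1χ_2 = ε, a = a_{12} ≠ 0, r = r_1 = r_2, q = χ_1(g_1). Then γ_1 ∗ γ_{12} fails the 2-cocycle condition on the triple (x_1^{r−1}, x_2, x_1^2) whenever q ≠ 1 and a a_1 (q+1) ≠ 0: the left-hand side of the cocycle identity equals (q+1) a a_1 while the right-hand side equals q(q+1) a a_1. -/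
open TensorProduct Coalgebra

set_option autoImplicit false
universe u
variable {K A : Type u} [Field K] [CharZero K] [Ring A] [Bialgebra K A]

open scoped Classical

/-- The `q`-factorial `(m)!_q`. -/
def qFact {K : Type u} [CommRing K] (q : K) : ℕ → K
  | 0 => 1
  | n + 1 => qFact q n * (∑ i ∈ Finset.range (n + 1), q ^ i)

section AuxLemmas

set_option linter.unusedSectionVars false
set_option synthInstance.maxHeartbeats 1000000
set_option maxHeartbeats 1000000

theorem conv_tmul (f g : A ⊗[K] A →ₗ[K] K) (u v : A)
    {ι ι' : Type} (s : Finset ι) (t : Finset ι')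
    (p p' : ι → A) (w w' : ι' → A)
    (hu : Coalgebra.comul (R := K) u = ∑ i ∈ s, (p i ⊗ₜ[K] p' i))
    (hv : Coalgebra.comul (R := K) v = ∑ j ∈ t, (w j ⊗ₜ[K] w' j)) :
    conv f g (u ⊗ₜ[K] v) =
      ∑ i ∈ s, ∑ j ∈ t, f (p i ⊗ₜ[K] w j) * g (p' i ⊗ₜ[K] w' j) := by
  have h1 : conv f g (u ⊗ₜ[K] v) = LinearMap.mul' K K (TensorProduct.map f g
      (TensorProduct.tensorTensorTensorComm K A A A A
        ((Coalgebra.comul (R := K) u) ⊗ₜ[K] (Coalgebra.comul (R := K) v)))) := rfl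
  rw [h1, hu, hv, TensorProduct.sum_tmul]
  simp only [TensorProduct.tmul_sum, map_sum, TensorProduct.tensorTensorTensorComm_tmul,
    TensorProduct.map_tmul, LinearMap.mul'_apply]

theorem conv3_tmul (F G : A ⊗[K] (A ⊗[K] A) →ₗ[K] K) (x y z : A)
    {ι₁ ι₂ ι₃ : Type} (s : Finset ι₁) (t : Finset ι₂) (e : Finset ι₃)
    (p p' : ι₁ → A) (w w' : ι₂ → A) (v v' : ι₃ → A)
    (hx : Coalgebra.comul (R := K) x = ∑ i ∈ s, (p i ⊗ₜ[K] p' i))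
    (hy : Coalgebra.comul (R := K) y = ∑ j ∈ t, (w j ⊗ₜ[K] w' j))
    (hz : Coalgebra.comul (R := K) z = ∑ k ∈ e, (v k ⊗ₜ[K] v' k)) :
    conv F G (x ⊗ₜ[K] (y ⊗ₜ[K] z)) =
      ∑ i ∈ s, ∑ j ∈ t, ∑ k ∈ e,
        F (p i ⊗ₜ[K] (w j ⊗ₜ[K] v k)) * G (p' i ⊗ₜ[K] (w' j ⊗ₜ[K] v' k)) := by
  have h1 : conv F G (x ⊗ₜ[K] (y ⊗ₜ[K] z)) = LinearMap.mul' K K (TensorProduct.map F G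
      (TensorProduct.tensorTensorTensorComm K A A (A ⊗[K] A) (A ⊗[K] A)
        ((Coalgebra.comul (R := K) x) ⊗ₜ[K]
          (TensorProduct.tensorTensorTensorComm K A A A A
            ((Coalgebra.comul (R := K) y) ⊗ₜ[K] (Coalgebra.comul (R := K) z)))))) := rfl
  rw [h1, hx, hy, hz, TensorProduct.sum_tmul]
  simp only [TensorProduct.tmul_sum, map_sum, TensorProduct.sum_tmul,
    TensorProduct.tensorTensorTensorComm_tmul, TensorProduct.map_tmul, LinearMap.mul'_apply,
    Finset.mul_sum, Finset.sum_mul]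
  exact Finset.sum_congr rfl fun i _ => Finset.sum_comm

theorem cocycleL_F (γ : A ⊗[K] A →ₗ[K] K) (a b c : A) :
    ((LinearMap.mul' K K) ∘ₗ TensorProduct.map (Coalgebra.counit (R := K)) γ)
      (a ⊗ₜ[K] (b ⊗ₜ[K] c)) = Coalgebra.counit (R := K) a * γ (b ⊗ₜ[K] c) := by
  simp

theorem cocycleL_G (γ : A ⊗[K] A →ₗ[K] K) (a b c : A) :
    (γ ∘ₗ TensorProduct.map LinearMap.id (LinearMap.mul' K A))
      (a ⊗ₜ[K] (b ⊗ₜ[K] c)) = γ (a ⊗ₜ[K] (b * c)) := by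
  simp

theorem cocycleR_F (γ : A ⊗[K] A →ₗ[K] K) (a b c : A) :
    ((LinearMap.mul' K K) ∘ₗ TensorProduct.map γ (Coalgebra.counit (R := K))
      ∘ₗ (TensorProduct.assoc K A A A).symm.toLinearMap)
      (a ⊗ₜ[K] (b ⊗ₜ[K] c)) = γ (a ⊗ₜ[K] b) * Coalgebra.counit (R := K) c := by
  simp

theorem cocycleR_G (γ : A ⊗[K] A →ₗ[K] K) (a b c : A) :
    (γ ∘ₗ TensorProduct.map (LinearMap.mul' K A) LinearMap.id
      ∘ₗ (TensorProduct.assoc K A A A).symm.toLinearMap)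
      (a ⊗ₜ[K] (b ⊗ₜ[K] c)) = γ ((a * b) ⊗ₜ[K] c) := by
  simp

variable {Γ : Type u} [CommGroup Γ] (grp : Γ →* A) (x₁ : A) (g₁ : Γ) (χ₁ : Γ →* K)

theorem grp_mul_pow (hcomm : ∀ u : Γ, grp u * x₁ = χ₁ u • (x₁ * grp u)) (u : Γ) (m : ℕ) :
    grp u * x₁ ^ m = (χ₁ u) ^ m • (x₁ ^ m * grp u) := by
  induction m with
  | zero => simp
  | succ m ih =>
    calc grp u * x₁ ^ (m + 1) = (grp u * x₁ ^ m) * x₁ := by rw [pow_succ, mul_assoc]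
      _ = (χ₁ u ^ m • (x₁ ^ m * grp u)) * x₁ := by rw [ih]
      _ = χ₁ u ^ m • (x₁ ^ m * (grp u * x₁)) := by rw [smul_mul_assoc, mul_assoc]
      _ = χ₁ u ^ m • (x₁ ^ m * (χ₁ u • (x₁ * grp u))) := by rw [hcomm]
      _ = (χ₁ u ^ m * χ₁ u) • ((x₁ ^ m * x₁) * grp u) := by
            rw [mul_smul_comm, smul_smul, mul_assoc]
      _ = χ₁ u ^ (m + 1) • (x₁ ^ (m + 1) * grp u) := by rw [pow_succ, pow_succ]

theorem pow_mul_grp (hcomm : ∀ u : Γ, grp u * x₁ = χ₁ u • (x₁ * grp u))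
    (hne : ∀ u : Γ, χ₁ u ≠ 0) (u : Γ) (m : ℕ) :
    x₁ ^ m * grp u = ((χ₁ u) ^ m)⁻¹ • (grp u * x₁ ^ m) := by
  rw [grp_mul_pow grp x₁ χ₁ hcomm, smul_smul, inv_mul_cancel₀ (pow_ne_zero _ (hne u)), one_smul]

theorem comul_pow (hgrp : ∀ u : Γ, Coalgebra.comul (R := K) (grp u) = grp u ⊗ₜ[K] grp u)
    (hx₁prim : Coalgebra.comul (R := K) x₁ = x₁ ⊗ₜ[K] (1 : A) + grp g₁ ⊗ₜ[K] x₁)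
    (hcomm : ∀ u : Γ, grp u * x₁ = χ₁ u • (x₁ * grp u))
    (hne : ∀ u : Γ, χ₁ u ≠ 0) (m : ℕ) :
    ∃ c : ℕ → K, c 0 = 1 ∧ c m = 1 ∧
      Coalgebra.comul (R := K) (x₁ ^ m) =
        ∑ j ∈ Finset.range (m + 1),
          ((c j • (grp (g₁ ^ j) * x₁ ^ (m - j))) ⊗ₜ[K] (x₁ ^ j)) := by
  induction m with
  | zero =>
    refine ⟨fun _ => 1, rfl, rfl, ?_⟩
    simp [Algebra.TensorProduct.one_def]
  | succ m ih =>
    obtain ⟨c, hc0, hcm, hc⟩ := ih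
    refine ⟨fun j => (if j = m + 1 then 0 else c j) +
      (if j = 0 then 0 else c (j - 1) * ((χ₁ g₁ ^ (m - (j - 1)))⁻¹)), by simpa using hc0, ?_, ?_⟩
    · simp [hcm]
    · rw [pow_succ, Bialgebra.comul_mul, hc, hx₁prim]
      rw [Finset.sum_mul]
      have expand : ∀ j ∈ Finset.range (m + 1),
          ((c j • (grp (g₁ ^ j) * x₁ ^ (m - j))) ⊗ₜ[K] (x₁ ^ j)) *
            (x₁ ⊗ₜ[K] (1 : A) + (grp g₁) ⊗ₜ[K] x₁) =
          ((c j • (grp (g₁ ^ j) * x₁ ^ (m + 1 - j))) ⊗ₜ[K] (x₁ ^ j)) +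
          (((c j * (χ₁ g₁ ^ (m - j))⁻¹) • (grp (g₁ ^ (j + 1)) * x₁ ^ (m - j))) ⊗ₜ[K] (x₁ ^ (j + 1))) := by
        intro j hj
        rw [Finset.mem_range] at hj
        rw [mul_add, Algebra.TensorProduct.tmul_mul_tmul, Algebra.TensorProduct.tmul_mul_tmul]
        congr 1
        · rw [smul_mul_assoc, mul_assoc, ← pow_succ, mul_one,
            show m - j + 1 = m + 1 - j from by omega]
        · rw [smul_mul_assoc, mul_assoc,
            pow_mul_grp grp x₁ χ₁ hcomm hne g₁ (m - j), ← pow_succ]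
          rw [mul_smul_comm, smul_smul]
          rw [← mul_assoc, ← map_mul, ← pow_succ]
      rw [Finset.sum_congr rfl expand, Finset.sum_add_distrib]
      have key : ∑ j ∈ Finset.range (m + 1 + 1),
          ((((if j = m + 1 then 0 else c j) +
            (if j = 0 then 0 else c (j - 1) * ((χ₁ g₁ ^ (m - (j - 1)))⁻¹))) •
              (grp (g₁ ^ j) * x₁ ^ (m + 1 - j))) ⊗ₜ[K] (x₁ ^ j)) =
          (∑ j ∈ Finset.range (m + 1),
            ((c j • (grp (g₁ ^ j) * x₁ ^ (m + 1 - j))) ⊗ₜ[K] (x₁ ^ j))) +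
          (∑ j ∈ Finset.range (m + 1),
            (((c j * (χ₁ g₁ ^ (m - j))⁻¹) • (grp (g₁ ^ (j + 1)) * x₁ ^ (m - j))) ⊗ₜ[K] (x₁ ^ (j + 1)))) := by
        have split : ∀ j ∈ Finset.range (m + 1 + 1),
            ((((if j = m + 1 then 0 else c j) +
              (if j = 0 then 0 else c (j - 1) * ((χ₁ g₁ ^ (m - (j - 1)))⁻¹))) •
                (grp (g₁ ^ j) * x₁ ^ (m + 1 - j))) ⊗ₜ[K] (x₁ ^ j)) =
            (((if j = m + 1 then 0 else c j) • (grp (g₁ ^ j) * x₁ ^ (m + 1 - j))) ⊗ₜ[K] (x₁ ^ j)) +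
            (((if j = 0 then 0 else c (j - 1) * ((χ₁ g₁ ^ (m - (j - 1)))⁻¹)) •
                (grp (g₁ ^ j) * x₁ ^ (m + 1 - j))) ⊗ₜ[K] (x₁ ^ j)) := by
          intro j _
          rw [add_smul, TensorProduct.add_tmul]
        rw [Finset.sum_congr rfl split, Finset.sum_add_distrib]
        congr 1
        · rw [Finset.sum_range_succ, if_pos rfl]
          simp only [zero_smul, TensorProduct.zero_tmul, add_zero]
          refine Finset.sum_congr rfl fun j hj => ?_
          rw [Finset.mem_range] at hj
          rw [if_neg (by omega)]
        · rw [Finset.sum_range_succ', if_pos rfl]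
          simp only [zero_smul, TensorProduct.zero_tmul, add_zero]
          refine Finset.sum_congr rfl fun j hj => ?_
          rw [if_neg (by omega)]
          simp only [Nat.add_sub_cancel, Nat.succ_sub_succ, Nat.sub_zero]
      rw [key]

end AuxLemmas

set_option maxHeartbeats 4000000 in
set_option synthInstance.maxHeartbeats 1000000 in
/-- Let `V` be a quantum plane with `χ₁χ₂ = ε`, `a = a₁₂ ≠ 0`,
`r = r₁ = r₂`, `q = χ₁(g₁)`.  Then `γ₁ ∗ γ₁₂` fails the 2-cocycle condition on the
triple `(x₁^{r−1}, x₂, x₁²)` whenever `q ≠ 1` and `a a₁ (q+1) ≠ 0`: the left-hand side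
of the cocycle identity equals `(q+1) a a₁` while the right-hand side equals
`q(q+1) a a₁`. -/
theorem stmt14 {Γ : Type u} [CommGroup Γ] [Fintype Γ] (grp : Γ →* A)
    (hgrp : ∀ u : Γ, Coalgebra.comul (R := K) (grp u) = grp u ⊗ₜ[K] grp u ∧
      Coalgebra.counit (R := K) (grp u) = 1)
    (x₁ x₂ : A) (g₁ g₂ : Γ) (χ₁ χ₂ : Γ →* K) (r : ℕ) (hr : 1 < r)
    (hx₁prim : Coalgebra.comul (R := K) x₁ = x₁ ⊗ₜ[K] (1 : A) + grp g₁ ⊗ₜ[K] x₁)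
    (hx₂prim : Coalgebra.comul (R := K) x₂ = x₂ ⊗ₜ[K] (1 : A) + grp g₂ ⊗ₜ[K] x₂)
    (hcnt₁ : Coalgebra.counit (R := K) x₁ = 0)
    (hcnt₂ : Coalgebra.counit (R := K) x₂ = 0)
    (hcomm₁ : ∀ u : Γ, grp u * x₁ = χ₁ u • (x₁ * grp u))
    (hcomm₂ : ∀ u : Γ, grp u * x₂ = χ₂ u • (x₂ * grp u))
    (hcompat : χ₁ g₂ * χ₂ g₁ = 1) (htriv : χ₁ * χ₂ = 1)
    (q : K) (hq : q = χ₁ g₁) (hprim : IsPrimitiveRoot q r)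
    (hbraid : x₁ * x₂ = χ₂ g₁ • (x₂ * x₁))
    (hnil₁ : x₁ ^ r = 0) (hnil₂ : x₂ ^ r = 0)
    (a a₁ : K) (ha : a ≠ 0)
    (γ₁ γ₁₂ : A ⊗[K] A →ₗ[K] K)
    (hbil₁ : ∀ (u u' : Γ) (c b : A), γ₁ ((grp u * c) ⊗ₜ[K] (b * grp u')) = γ₁ (c ⊗ₜ[K] b))
    (hbil₁₂ : ∀ (u u' : Γ) (c b : A),
      γ₁₂ ((grp u * c) ⊗ₜ[K] (b * grp u')) = γ₁₂ (c ⊗ₜ[K] b))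
    (hval₁ : ∀ n₁ n₂ m₁ m₂ : ℕ, n₁ < r → n₂ < r → m₁ < r → m₂ < r →
      γ₁ ((x₁ ^ n₁ * x₂ ^ n₂) ⊗ₜ[K] (x₁ ^ m₁ * x₂ ^ m₂)) =
        (if n₁ = 0 ∧ n₂ = 0 ∧ m₁ = 0 ∧ m₂ = 0 then (1 : K) else 0) +
        (if n₂ = 0 ∧ m₂ = 0 ∧ 0 < n₁ ∧ n₁ + m₁ = r then a₁ else 0))
    (hval₁₂ : ∀ n₁ n₂ m₁ m₂ : ℕ, n₁ < r → n₂ < r → m₁ < r → m₂ < r →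
      γ₁₂ ((x₁ ^ n₁ * x₂ ^ n₂) ⊗ₜ[K] (x₁ ^ m₁ * x₂ ^ m₂)) =
        (if n₁ = 0 ∧ n₂ = 0 ∧ m₁ = 0 ∧ m₂ = 0 then (1 : K) else 0) +
        (if n₁ = 0 ∧ m₂ = 0 ∧ 0 < n₂ ∧ n₂ = m₁ then qFact q n₂ * a ^ n₂ else 0)) :
    cocycleL (LinearMap.mul' K A) (conv γ₁ γ₁₂)
        ((x₁ ^ (r - 1)) ⊗ₜ[K] (x₂ ⊗ₜ[K] (x₁ ^ 2))) = (q + 1) * a * a₁ ∧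
    cocycleR (LinearMap.mul' K A) (conv γ₁ γ₁₂)
        ((x₁ ^ (r - 1)) ⊗ₜ[K] (x₂ ⊗ₜ[K] (x₁ ^ 2))) = q * ((q + 1) * a * a₁) ∧
    (q ≠ 1 → (q + 1) * a * a₁ ≠ 0 →
      cocycleL (LinearMap.mul' K A) (conv γ₁ γ₁₂)
          ((x₁ ^ (r - 1)) ⊗ₜ[K] (x₂ ⊗ₜ[K] (x₁ ^ 2))) ≠
        cocycleR (LinearMap.mul' K A) (conv γ₁ γ₁₂)
          ((x₁ ^ (r - 1)) ⊗ₜ[K] (x₂ ⊗ₜ[K] (x₁ ^ 2)))) := by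
  classical
  have h0r : 0 < r := by omega
  have hcg : ∀ u : Γ, Coalgebra.comul (R := K) (grp u) = (grp u) ⊗ₜ[K] (grp u) :=
    fun u => (hgrp u).1
  have hce : ∀ u : Γ, Coalgebra.counit (R := K) (grp u) = 1 := fun u => (hgrp u).2
  have htriv' : ∀ u : Γ, χ₁ u * χ₂ u = 1 := by
    intro u
    have := congrArg (fun f : Γ →* K => f u) htriv
    simpa using this
  have hχ₁ne : ∀ u : Γ, χ₁ u ≠ 0 := fun u => left_ne_zero_of_mul_eq_one (htriv' u)
  have hq0 : q ≠ 0 := hq ▸ hχ₁ne g₁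
  have hqr : q ^ r = 1 := hprim.pow_eq_one
  have hχ₂g₁ : χ₂ g₁ = q⁻¹ := by
    have h := htriv' g₁
    rw [← hq] at h
    field_simp at h ⊢
    linear_combination h
  have hχ₁g₂ : χ₁ g₂ = q := by
    have h := hcompat
    rw [hχ₂g₁] at h
    field_simp at h
    linear_combination h
  rcases show r = 2 ∨ 2 < r by omega with hr2 | hr3
  · -- degenerate case r = 2 : here x₁² = 0 and q = -1
    have hx2 : x₁ ^ 2 = 0 := by rw [hr2] at hnil₁; exact hnil₁
    have hq2 : q ^ 2 = 1 := by rw [hr2] at hqr; exact hqr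
    have hq1 : q ≠ 1 := by
      have h := hprim.pow_ne_one_of_pos_of_lt one_ne_zero (by omega : 1 < r)
      simpa using h
    have hqm1 : q + 1 = 0 := by
      have hfac : (q - 1) * (q + 1) = 0 := by linear_combination hq2
      rcases mul_eq_zero.mp hfac with h | h
      · exact absurd (by linear_combination h) hq1
      · exact h
    have harg : (x₁ ^ (r - 1)) ⊗ₜ[K] (x₂ ⊗ₜ[K] (x₁ ^ 2)) = 0 := by
      rw [hx2, TensorProduct.tmul_zero, TensorProduct.tmul_zero]
    have hv : (q + 1) * a * a₁ = 0 := by rw [hqm1]; ring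
    refine ⟨by rw [harg, map_zero, hv], by rw [harg, map_zero, hv, mul_zero],
      fun _ hne => absurd hv hne⟩
  set n := r - 1 with hndef
  have hn1 : n + 1 = r := by omega
  have hn0 : 0 < n := by omega
  have hnr : n < r := by omega
  have hqn : (q ^ n)⁻¹ = q := by
    have h : q ^ n * q = 1 := by rw [← pow_succ, hn1, hqr]
    exact inv_eq_of_mul_eq_one_right h
  have hcntpow : ∀ m : ℕ, Coalgebra.counit (R := K) (x₁ ^ m) = if m = 0 then 1 else 0 := by
    intro m
    induction m with
    | zero => simp
    | succ m _ => rw [pow_succ, Bialgebra.counit_mul, hcnt₁, mul_zero]; simp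
  -- stripped evaluation lemmas
  have HV₁ : ∀ (u u' : Γ) (n₁ n₂ m₁ m₂ : ℕ), n₁ < r → n₂ < r → m₁ < r → m₂ < r →
      γ₁ ((grp u * (x₁ ^ n₁ * x₂ ^ n₂)) ⊗ₜ[K] ((x₁ ^ m₁ * x₂ ^ m₂) * grp u')) =
        (if n₁ = 0 ∧ n₂ = 0 ∧ m₁ = 0 ∧ m₂ = 0 then (1 : K) else 0) +
        (if n₂ = 0 ∧ m₂ = 0 ∧ 0 < n₁ ∧ n₁ + m₁ = r then a₁ else 0) := by
    intro u u' n₁ n₂ m₁ m₂ h1 h2 h3 h4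
    rw [hbil₁, hval₁ n₁ n₂ m₁ m₂ h1 h2 h3 h4]
  have HV₁₂ : ∀ (u u' : Γ) (n₁ n₂ m₁ m₂ : ℕ), n₁ < r → n₂ < r → m₁ < r → m₂ < r →
      γ₁₂ ((grp u * (x₁ ^ n₁ * x₂ ^ n₂)) ⊗ₜ[K] ((x₁ ^ m₁ * x₂ ^ m₂) * grp u')) =
        (if n₁ = 0 ∧ n₂ = 0 ∧ m₁ = 0 ∧ m₂ = 0 then (1 : K) else 0) +
        (if n₁ = 0 ∧ m₂ = 0 ∧ 0 < n₂ ∧ n₂ = m₁ then qFact q n₂ * a ^ n₂ else 0) := by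
    intro u u' n₁ n₂ m₁ m₂ h1 h2 h3 h4
    rw [hbil₁₂, hval₁₂ n₁ n₂ m₁ m₂ h1 h2 h3 h4]
  have hbr : x₂ * x₁ = q • (x₁ * x₂) := by
    rw [hbraid, hχ₂g₁, smul_smul, mul_inv_cancel₀ hq0, one_smul]
  -- comultiplication representations
  obtain ⟨c, hc0, hcn, hcxn⟩ := comul_pow grp x₁ g₁ χ₁ hcg hx₁prim hcomm₁ hχ₁ne n
  have HC1 : Coalgebra.comul (R := K) x₁ =
      ∑ i : Fin 2, ((![x₁, grp g₁] i) ⊗ₜ[K] (![(1 : A), x₁] i)) := by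
    rw [hx₁prim]; simp [Fin.sum_univ_two]
  have HC2 : Coalgebra.comul (R := K) x₂ =
      ∑ i : Fin 2, ((![x₂, grp g₂] i) ⊗ₜ[K] (![(1 : A), x₂] i)) := by
    rw [hx₂prim]; simp [Fin.sum_univ_two]
  have HCg : ∀ u : Γ, Coalgebra.comul (R := K) (grp u) =
      ∑ _i : Fin 1, ((grp u) ⊗ₜ[K] (grp u)) := by
    intro u; rw [hcg u]; simp
  have HCone : Coalgebra.comul (R := K) (1 : A) =
      ∑ _i : Fin 1, ((1 : A) ⊗ₜ[K] (1 : A)) := by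
    simp [Algebra.TensorProduct.one_def]
  have HCsq : Coalgebra.comul (R := K) (x₁ ^ 2) =
      ∑ i : Fin 4, ((![x₁ ^ 2, x₁ * grp g₁, q • (x₁ * grp g₁), grp g₁ * grp g₁] i) ⊗ₜ[K]
        (![(1 : A), x₁, x₁, x₁ ^ 2] i)) := by
    conv_lhs => rw [pow_two, Bialgebra.comul_mul, hx₁prim]
    simp only [add_mul, mul_add, Algebra.TensorProduct.tmul_mul_tmul, mul_one, one_mul]
    rw [hcomm₁ g₁, ← hq]
    simp [Fin.sum_univ_four, ← pow_two]
    abel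
  have HCx1g : Coalgebra.comul (R := K) (x₁ * grp g₁) =
      ∑ i : Fin 2, ((![x₁ * grp g₁, grp g₁ * grp g₁] i) ⊗ₜ[K]
        (![grp g₁, x₁ * grp g₁] i)) := by
    conv_lhs => rw [Bialgebra.comul_mul, hx₁prim, hcg g₁]
    simp only [add_mul, Algebra.TensorProduct.tmul_mul_tmul, mul_one, one_mul]
    simp [Fin.sum_univ_two]
  have HCgg : Coalgebra.comul (R := K) (grp g₁ * grp g₁) =
      ∑ _i : Fin 1, ((grp g₁ * grp g₁) ⊗ₜ[K] (grp g₁ * grp g₁)) := by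
    rw [Bialgebra.comul_mul, hcg g₁, Algebra.TensorProduct.tmul_mul_tmul]; simp
  -- comul of x₁^n * x₂ (product representation)
  have HCxnx₂ : Coalgebra.comul (R := K) (x₁ ^ n * x₂) =
      ∑ p ∈ (Finset.range (n + 1)) ×ˢ (Finset.univ : Finset (Fin 2)),
        (((c p.1 • (grp (g₁ ^ p.1) * x₁ ^ (n - p.1))) * (![x₂, grp g₂] p.2)) ⊗ₜ[K]
          ((x₁ ^ p.1) * (![(1 : A), x₂] p.2))) := by
    rw [Bialgebra.comul_mul, hcxn, HC2, Finset.sum_mul_sum]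
    rw [Finset.sum_product]
    exact Finset.sum_congr rfl fun i _ => Finset.sum_congr rfl fun j _ => by
      rw [Algebra.TensorProduct.tmul_mul_tmul]
  have HCsqx₂ : Coalgebra.comul (R := K) (x₁ ^ 2 * x₂) =
      ∑ p ∈ (Finset.univ : Finset (Fin 4)) ×ˢ (Finset.univ : Finset (Fin 2)),
        (((![x₁ ^ 2, x₁ * grp g₁, q • (x₁ * grp g₁), grp g₁ * grp g₁] p.1) *
            (![x₂, grp g₂] p.2)) ⊗ₜ[K]
          ((![(1 : A), x₁, x₁, x₁ ^ 2] p.1) * (![(1 : A), x₂] p.2))) := by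
    rw [Bialgebra.comul_mul, HCsq, HC2, Finset.sum_mul_sum]
    rw [Finset.sum_product]
    exact Finset.sum_congr rfl fun i _ => Finset.sum_congr rfl fun j _ => by
      rw [Algebra.TensorProduct.tmul_mul_tmul]
  -- the γ-values
  have VA : conv γ₁ γ₁₂ ((x₁ ^ n) ⊗ₜ[K] (1 : A)) = 0 := by
    rw [conv_tmul γ₁ γ₁₂ _ _ _ _ _ _ _ _ hcxn HCone]
    apply Finset.sum_eq_zero
    intro j hj
    rw [Finset.mem_range] at hj
    by_cases h0 : j = 0
    · subst h0
      have e1 := HV₁ 1 1 n 0 0 0 hnr h0r h0r h0r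
      simp [hn0.ne', show n ≠ r from by omega] at e1
      simp [e1, hc0]
    · have e2 := HV₁₂ 1 1 j 0 0 0 (by omega) h0r h0r h0r
      simp [h0] at e2
      simp [e2]
  have VB1 : conv γ₁ γ₁₂ (x₂ ⊗ₜ[K] (x₁ * grp g₁)) = a := by
    rw [conv_tmul γ₁ γ₁₂ _ _ _ _ _ _ _ _ HC2 HCx1g]
    have e1 := HV₁ 1 g₁ 0 1 1 0 h0r hr hr h0r
    have e2 := HV₁ 1 (g₁ * g₁) 0 1 0 0 h0r hr h0r h0r
    have e3 := HV₁ g₂ g₁ 0 0 1 0 h0r h0r hr h0r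
    have e4 := HV₁ g₂ (g₁ * g₁) 0 0 0 0 h0r h0r h0r h0r
    have e6 := HV₁₂ 1 g₁ 0 1 1 0 h0r hr hr h0r
    simp [qFact] at e1 e2 e3 e4 e6
    simp [Fin.sum_univ_two, e1, e2, e3, e4, e6]
  have VB2 : conv γ₁ γ₁₂ ((x₁ ^ n) ⊗ₜ[K] x₁) = a₁ := by
    rw [conv_tmul γ₁ γ₁₂ _ _ _ _ _ _ _ _ hcxn HC1]
    rw [Finset.sum_eq_single 0]
    · have e1 := HV₁ 1 1 n 0 1 0 hnr h0r hr h0r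
      simp [hn0, hn1] at e1
      have e2 := HV₁₂ 1 1 0 0 0 0 h0r h0r h0r h0r
      have e3 := HV₁₂ 1 1 0 0 1 0 h0r h0r hr h0r
      simp at e2 e3
      simp [Fin.sum_univ_two, e1, e2, e3, hc0]
    · intro j hj h0
      rw [Finset.mem_range] at hj
      have e4 := HV₁₂ 1 1 j 0 0 0 (by omega) h0r h0r h0r
      have e5 := HV₁₂ 1 1 j 0 1 0 (by omega) h0r hr h0r
      simp [h0] at e4 e5
      simp [Fin.sum_univ_two, e4, e5]
    · intro h
      exact absurd (Finset.mem_range.mpr (by omega)) h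
  have VC : conv γ₁ γ₁₂ (x₂ ⊗ₜ[K] (grp g₁ * grp g₁)) = 0 := by
    rw [conv_tmul γ₁ γ₁₂ _ _ _ _ _ _ _ _ HC2 HCgg]
    have e1 := HV₁ 1 (g₁ * g₁) 0 1 0 0 h0r hr h0r h0r
    have e2 := HV₁₂ 1 (g₁ * g₁) 0 1 0 0 h0r hr h0r h0r
    simp at e1 e2
    simp [Fin.sum_univ_two, e1, e2]
  have VD : conv γ₁ γ₁₂ ((grp g₂) ⊗ₜ[K] (x₁ ^ 2)) = 0 := by
    rw [conv_tmul γ₁ γ₁₂ _ _ _ _ _ _ _ _ (HCg g₂) HCsq]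
    have e1 := HV₁ g₂ 1 0 0 2 0 h0r h0r hr3 h0r
    have e2 := HV₁ g₂ g₁ 0 0 1 0 h0r h0r hr h0r
    have e3 := HV₁ g₂ (g₁ * g₁) 0 0 0 0 h0r h0r h0r h0r
    have e4 := HV₁₂ g₂ 1 0 0 2 0 h0r h0r hr3 h0r
    simp at e1 e2 e3 e4
    simp [Fin.sum_univ_four, e1, e2, e3, e4, TensorProduct.tmul_smul]
  have VE : conv γ₁ γ₁₂ ((grp g₂) ⊗ₜ[K] (x₁ * grp g₁)) = 0 := by
    rw [conv_tmul γ₁ γ₁₂ _ _ _ _ _ _ _ _ (HCg g₂) HCx1g]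
    have e1 := HV₁ g₂ g₁ 0 0 1 0 h0r h0r hr h0r
    have e2 := HV₁ g₂ (g₁ * g₁) 0 0 0 0 h0r h0r h0r h0r
    have e3 := HV₁₂ g₂ g₁ 0 0 1 0 h0r h0r hr h0r
    simp at e1 e2 e3
    simp [Fin.sum_univ_two, e1, e2, e3]
  have VF : conv γ₁ γ₁₂ ((grp g₂) ⊗ₜ[K] (grp g₁ * grp g₁)) = 1 := by
    rw [conv_tmul γ₁ γ₁₂ _ _ _ _ _ _ _ _ (HCg g₂) HCgg]
    have e1 := HV₁ g₂ (g₁ * g₁) 0 0 0 0 h0r h0r h0r h0r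
    have e2 := HV₁₂ g₂ (g₁ * g₁) 0 0 0 0 h0r h0r h0r h0r
    simp at e1 e2
    simp [e1, e2]
  have VG : ∀ u : Γ, conv γ₁ γ₁₂ ((grp u) ⊗ₜ[K] (grp g₂)) = 1 := by
    intro u
    rw [conv_tmul γ₁ γ₁₂ _ _ _ _ _ _ _ _ (HCg u) (HCg g₂)]
    have e1 := HV₁ u g₂ 0 0 0 0 h0r h0r h0r h0r
    have e2 := HV₁₂ u g₂ 0 0 0 0 h0r h0r h0r h0r
    simp at e1 e2
    simp [e1, e2]
  have K1 : ∀ j : ℕ, j < r → γ₁₂ ((x₁ ^ j) ⊗ₜ[K] x₂) = 0 := by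
    intro j hj; have := HV₁₂ 1 1 j 0 0 1 hj h0r h0r hr; simpa using this
  have K2 : ∀ j : ℕ, j < r → γ₁₂ ((x₁ ^ j) ⊗ₜ[K] (x₁ * x₂)) = 0 := by
    intro j hj; have := HV₁₂ 1 1 j 0 1 1 hj h0r hr hr; simpa using this
  have K3 : ∀ j : ℕ, j < r → γ₁₂ ((x₁ ^ j) ⊗ₜ[K] (x₁ ^ 2 * x₂)) = 0 := by
    intro j hj; have := HV₁₂ 1 1 j 0 2 1 hj h0r hr3 hr; simpa using this
  have K4 : ∀ j : ℕ, j < r → γ₁₂ ((x₁ ^ j) ⊗ₜ[K] x₁) = 0 := by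
    intro j hj; have := HV₁₂ 1 1 j 0 1 0 hj h0r hr h0r; simpa using this
  have K5 : ∀ j : ℕ, j < r → γ₁₂ ((x₁ ^ j) ⊗ₜ[K] (x₁ ^ 2)) = 0 := by
    intro j hj; have := HV₁₂ 1 1 j 0 2 0 hj h0r hr3 h0r; simpa using this
  have K6 : ∀ j : ℕ, j < r → j ≠ 0 → γ₁₂ ((x₁ ^ j) ⊗ₜ[K] (1 : A)) = 0 := by
    intro j hj hj0; have := HV₁₂ 1 1 j 0 0 0 hj h0r h0r h0r; simpa [hj0] using this
  have K7 : γ₁ ((x₁ ^ n) ⊗ₜ[K] (x₁ ^ 2 * x₂)) = 0 := by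
    have := HV₁ 1 1 n 0 2 1 hnr h0r hr3 hr; simpa using this
  have K8 : γ₁ ((x₁ ^ n * x₂) ⊗ₜ[K] (x₁ ^ 2)) = 0 := by
    have := HV₁ 1 1 n 1 2 0 hnr hr hr3 h0r; simpa using this
  have K9 : ∀ j : ℕ, j < r → γ₁₂ ((x₁ ^ j * x₂) ⊗ₜ[K] (1 : A)) = 0 := by
    intro j hj; have := HV₁₂ 1 1 j 1 0 0 hj hr h0r h0r; simpa using this
  have K10 : ∀ j : ℕ, j < r → j ≠ 0 → γ₁₂ ((x₁ ^ j * x₂) ⊗ₜ[K] x₁) = 0 := by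
    intro j hj hj0; have := HV₁₂ 1 1 j 1 1 0 hj hr hr h0r; simpa [hj0] using this
  have K10' : γ₁₂ (x₂ ⊗ₜ[K] x₁) = a := by
    have := HV₁₂ 1 1 0 1 1 0 h0r hr hr h0r; simpa [qFact] using this
  have K11 : ∀ j : ℕ, j < r → γ₁₂ ((x₁ ^ j * x₂) ⊗ₜ[K] (x₁ ^ 2)) = 0 := by
    intro j hj; have := HV₁₂ 1 1 j 1 2 0 hj hr hr3 h0r; simpa using this
  have K12 : γ₁ ((grp g₂ * x₁ ^ n) ⊗ₜ[K] (x₁ * grp g₁)) = a₁ := by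
    have := HV₁ g₂ g₁ n 0 1 0 hnr h0r hr h0r; simpa [hn0, hn1] using this
  have hxg2 : x₁ ^ n * grp g₂ = q • (grp g₂ * x₁ ^ n) := by
    rw [pow_mul_grp grp x₁ χ₁ hcomm₁ hχ₁ne g₂ n, hχ₁g₂, hqn]
  have hbr2 : x₂ * x₁ ^ 2 = (q * q) • (x₁ ^ 2 * x₂) := by
    have h1 : x₂ * x₁ ^ 2 = (x₂ * x₁) * x₁ := by rw [pow_two, ← mul_assoc]
    rw [h1, hbr, smul_mul_assoc, mul_assoc, hbr, mul_smul_comm, smul_smul,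
      ← mul_assoc, ← pow_two, ← pow_two]
  have V7 : conv γ₁ γ₁₂ ((x₁ ^ n) ⊗ₜ[K] (x₁ ^ 2 * x₂)) = 0 := by
    rw [conv_tmul γ₁ γ₁₂ _ _ _ _ _ _ _ _ hcxn HCsqx₂]
    apply Finset.sum_eq_zero
    intro j hj
    rw [Finset.mem_range] at hj
    rw [Finset.sum_product]
    by_cases h0 : j = 0
    · subst h0
      have a1 := K1 0 h0r
      have a2 := K2 0 h0r
      have a3 := K3 0 h0r
      have a4 := K4 0 h0r
      have a5 := K5 0 h0r
      simp only [pow_zero] at a1 a2 a3 a4 a5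
      simp [Fin.sum_univ_four, Fin.sum_univ_two, a1, a2, a3, a4, a5, K7, hc0,
        smul_mul_assoc, ← TensorProduct.smul_tmul', TensorProduct.tmul_smul]
    · simp [Fin.sum_univ_four, Fin.sum_univ_two, K1 j (by omega), K2 j (by omega),
        K3 j (by omega), K4 j (by omega), K5 j (by omega), K6 j (by omega) h0,
        smul_mul_assoc, ← TensorProduct.smul_tmul', TensorProduct.tmul_smul]
  have V8 : ∀ (u : Γ) (m : ℕ), m < r →
      conv γ₁ γ₁₂ ((grp u * x₁ ^ m) ⊗ₜ[K] x₂) = 0 := by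
    intro u m hm
    obtain ⟨d, hd0, hdm, hd⟩ := comul_pow grp x₁ g₁ χ₁ hcg hx₁prim hcomm₁ hχ₁ne m
    have hrep : Coalgebra.comul (R := K) (grp u * x₁ ^ m) =
        ∑ j ∈ Finset.range (m + 1),
          ((d j • (grp (u * g₁ ^ j) * x₁ ^ (m - j))) ⊗ₜ[K] (grp u * x₁ ^ j)) := by
      rw [Bialgebra.comul_mul, hcg u, hd, Finset.mul_sum]
      refine Finset.sum_congr rfl fun j _ => ?_
      rw [Algebra.TensorProduct.tmul_mul_tmul, mul_smul_comm, ← mul_assoc, ← map_mul]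
    rw [conv_tmul γ₁ γ₁₂ _ _ _ _ _ _ _ _ hrep HC2]
    apply Finset.sum_eq_zero
    intro j hj
    rw [Finset.mem_range] at hj
    have e1 := HV₁ (u * g₁ ^ j) 1 (m - j) 0 0 1 (by omega) h0r h0r hr
    have e2 := HV₁₂ u 1 j 0 0 1 (by omega) h0r h0r hr
    simp at e1 e2
    simp [Fin.sum_univ_two, e1, e2, ← TensorProduct.smul_tmul']
  have V9 : ∀ (u : Γ) (m : ℕ), m < r → 0 < m →
      conv γ₁ γ₁₂ ((grp u * x₁ ^ m) ⊗ₜ[K] (grp g₂)) = 0 := by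
    intro u m hm hm0
    obtain ⟨d, hd0, hdm, hd⟩ := comul_pow grp x₁ g₁ χ₁ hcg hx₁prim hcomm₁ hχ₁ne m
    have hrep : Coalgebra.comul (R := K) (grp u * x₁ ^ m) =
        ∑ j ∈ Finset.range (m + 1),
          ((d j • (grp (u * g₁ ^ j) * x₁ ^ (m - j))) ⊗ₜ[K] (grp u * x₁ ^ j)) := by
      rw [Bialgebra.comul_mul, hcg u, hd, Finset.mul_sum]
      refine Finset.sum_congr rfl fun j _ => ?_
      rw [Algebra.TensorProduct.tmul_mul_tmul, mul_smul_comm, ← mul_assoc, ← map_mul]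
    rw [conv_tmul γ₁ γ₁₂ _ _ _ _ _ _ _ _ hrep (HCg g₂)]
    apply Finset.sum_eq_zero
    intro j hj
    rw [Finset.mem_range] at hj
    by_cases h0 : j = 0
    · subst h0
      have e1 := HV₁ (u * g₁ ^ 0) g₂ m 0 0 0 (by omega) h0r h0r h0r
      simp [hm0.ne', show m ≠ r from by omega] at e1
      simp [e1, ← TensorProduct.smul_tmul']
    · have e2 := HV₁₂ u g₂ j 0 0 0 (by omega) h0r h0r h0r
      simp [h0] at e2
      simp [e2, ← TensorProduct.smul_tmul']
  have V10 : conv γ₁ γ₁₂ ((x₁ ^ n * x₂) ⊗ₜ[K] (x₁ ^ 2)) = q * ((q + 1) * a * a₁) := by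
    rw [conv_tmul γ₁ γ₁₂ _ _ _ _ _ _ _ _ HCxnx₂ HCsq]
    rw [Finset.sum_product]
    rw [Finset.sum_eq_single 0]
    · have a4 := K4 0 h0r
      have a5 := K5 0 h0r
      have a9 := K9 0 h0r
      have a11 := K11 0 h0r
      simp only [pow_zero, one_mul] at a4 a5 a9 a11
      simp [Fin.sum_univ_four, Fin.sum_univ_two, K8, a9, a4, a5,
        a11, K10', K12, hc0, hxg2, smul_mul_assoc, ← TensorProduct.smul_tmul',
        TensorProduct.tmul_smul]
      ring
    · intro j hj h0
      rw [Finset.mem_range] at hj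
      simp [Fin.sum_univ_four, Fin.sum_univ_two, K9 j (by omega), K10 j (by omega) h0,
        K11 j (by omega), K4 j (by omega), K5 j (by omega), K6 j (by omega) h0,
        smul_mul_assoc, ← TensorProduct.smul_tmul', TensorProduct.tmul_smul]
    · intro h
      exact absurd (Finset.mem_range.mpr (by omega)) h
  -- main computations
  have hL : cocycleL (LinearMap.mul' K A) (conv γ₁ γ₁₂)
      ((x₁ ^ n) ⊗ₜ[K] (x₂ ⊗ₜ[K] (x₁ ^ 2))) = (q + 1) * a * a₁ := by
    rw [show cocycleL (LinearMap.mul' K A) (conv γ₁ γ₁₂) =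
      conv ((LinearMap.mul' K K) ∘ₗ TensorProduct.map Coalgebra.counit (conv γ₁ γ₁₂))
        ((conv γ₁ γ₁₂) ∘ₗ TensorProduct.map LinearMap.id (LinearMap.mul' K A)) from rfl]
    rw [conv3_tmul _ _ _ _ _ _ _ _ _ _ _ _ _ _ hcxn HC2 HCsq]
    simp only [cocycleL_F, cocycleL_G]
    rw [Finset.sum_eq_single n]
    · simp [Fin.sum_univ_two, Fin.sum_univ_four, hcn, hce, hcntpow, Nat.sub_self,
        VA, VB1, VB2, VC, VD, VE, VF, V7, hbr, hbr2,
        TensorProduct.tmul_smul, ← TensorProduct.smul_tmul']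
      ring
    · intro j hj hjn
      rw [Finset.mem_range] at hj
      apply Finset.sum_eq_zero
      intro i2 _
      apply Finset.sum_eq_zero
      intro k _
      have hz : Coalgebra.counit (R := K) (c j • (grp (g₁ ^ j) * x₁ ^ (n - j))) = 0 := by
        simp [hce, hcntpow, show n - j ≠ 0 from by omega]
      rw [hz, zero_mul, zero_mul]
    · intro h
      exact absurd (Finset.mem_range.mpr (by omega)) h
  have hR : cocycleR (LinearMap.mul' K A) (conv γ₁ γ₁₂)
      ((x₁ ^ n) ⊗ₜ[K] (x₂ ⊗ₜ[K] (x₁ ^ 2))) = q * ((q + 1) * a * a₁) := by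
    rw [show cocycleR (LinearMap.mul' K A) (conv γ₁ γ₁₂) =
      conv ((LinearMap.mul' K K) ∘ₗ TensorProduct.map (conv γ₁ γ₁₂) Coalgebra.counit
          ∘ₗ (TensorProduct.assoc K A A A).symm.toLinearMap)
        ((conv γ₁ γ₁₂) ∘ₗ TensorProduct.map (LinearMap.mul' K A) LinearMap.id
          ∘ₗ (TensorProduct.assoc K A A A).symm.toLinearMap) from rfl]
    rw [conv3_tmul _ _ _ _ _ _ _ _ _ _ _ _ _ _ hcxn HC2 HCsq]
    simp only [cocycleR_F, cocycleR_G]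
    rw [Finset.sum_eq_single n]
    · have b1 := V8 (g₁ ^ n) 0 h0r
      have b2 := VG (g₁ ^ n)
      simp only [pow_zero, mul_one, map_pow] at b1 b2
      simp [Fin.sum_univ_two, Fin.sum_univ_four, hcn, hce, hcnt₁, hcntpow, Nat.sub_self,
        b1, b2, V10, TensorProduct.tmul_smul, ← TensorProduct.smul_tmul']
    · intro j hj hjn
      rw [Finset.mem_range] at hj
      have b1 := V8 (g₁ ^ j) (n - j) (by omega)
      have b2 := V9 (g₁ ^ j) (n - j) (by omega) (by omega)
      simp only [map_pow] at b1 b2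
      simp [Fin.sum_univ_two, Fin.sum_univ_four, hcnt₁, hce, b1, b2,
        TensorProduct.tmul_smul, ← TensorProduct.smul_tmul']
    · intro h
      exact absurd (Finset.mem_range.mpr (by omega)) h
  refine ⟨hL, hR, fun hq1 hne0 heq => ?_⟩
  rw [hL, hR] at heq
  have : (q - 1) * ((q + 1) * a * a₁) = 0 := by linear_combination -heq
  rcases mul_eq_zero.mp this with h | h
  · exact hq1 (by linear_combination h)
  · exact hne0 h
end
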